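/- arXiv:2512.16165 — 6 statements merged into one kernel-verified Lean document; each statement's English description precedes it below -/
import Mathlib

section
/- Let H[n-1] be the n×(n+2) matrix over K[x_1,…,x_{n+2}] with entries H[n-1]_{i,j} = x_{i+j-1} if i+j-1 ≤ n+2 and 0 otherwise (a degenerate Hankel matrix). For any subset a = {a_1,…,a_{n-2}} of {1,…,n+2}, the 2n×2n matrix L_a whose top n rows are (C_1,…,C_{n+2},0,…,0) and whose bottom n rows are (C_2,…,C_{n+2},0,C_{a_1},…,C_{a_{n-2}}), where C_i denotes the i-th column of H[n-1], has determinant zero. -/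
open MvPolynomial

/-- The degenerate Hankel matrix `H[n-1]`: the `n × (n+2)` matrix over
`K[x_1,…,x_{n+2}]` with `(i,j)` entry `x_{i+j-1}` (1-based) if `i+j-1 ≤ n+2`
and `0` otherwise.  In 0-based indexing, the entry is `X (i+j)` if `i+j < n+2`. -/
noncomputable def degHankel (K : Type*) [Field K] (n : ℕ) :
    Matrix (Fin n) (Fin (n + 2)) (MvPolynomial (Fin (n + 2)) K) :=
  fun i j => if h : i.val + j.val < n + 2 then X (⟨i.val + j.val, h⟩ : Fin (n + 2)) else 0

/-- The `2n × 2n` matrix `L_a` whose top `n` rows are `(C_1, …, C_{n+2}, 0, …, 0)`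
and whose bottom `n` rows are `(C_2, …, C_{n+2}, 0, C_{a_1}, …, C_{a_{n-2}})`,
where `C_i` is the `i`-th column of `H[n-1]` and `a = {a_1,…,a_{n-2}} ⊆ {1,…,n+2}`. -/
noncomputable def Lmat (K : Type*) [Field K] (n : ℕ) (a : Fin (n - 2) → Fin (n + 2)) :
    Matrix (Fin (2 * n)) (Fin (2 * n)) (MvPolynomial (Fin (n + 2)) K) :=
  fun r c =>
    if hr : r.val < n then
      -- top block: columns C_1, …, C_{n+2}, then zeros
      if hc : c.val < n + 2 then degHankel K n ⟨r.val, hr⟩ ⟨c.val, hc⟩ else 0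
    else
      -- bottom block: columns C_2, …, C_{n+2}, then 0, then C_{a_1}, …, C_{a_{n-2}}
      if hc : c.val < n + 1 then
        degHankel K n ⟨r.val - n, by have := r.2; omega⟩ ⟨c.val + 1, by omega⟩
      else if hc2 : c.val = n + 1 then 0
      else degHankel K n ⟨r.val - n, by have := r.2; omega⟩
        (a ⟨c.val - (n + 2), by have := c.2; omega⟩)

/-- Bottom row `n+i` agrees with top row `i+1` on the first `n+2` columns. -/
lemma Lmat_row_eq (K : Type*) [Field K] (n : ℕ) (hn : 2 ≤ n)
    (a : Fin (n - 2) → Fin (n + 2)) (i : ℕ) (hi : i < n - 1)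
    (c : Fin (2 * n)) (hc : c.val < n + 2) :
    Lmat K n a ⟨n + i, by omega⟩ c = Lmat K n a ⟨i + 1, by omega⟩ c := by
  unfold Lmat
  have h1 : ¬ (n + i < n) := by omega
  have h2 : i + 1 < n := by omega
  rw [dif_neg h1, dif_pos h2, dif_pos hc]
  by_cases h3 : c.val < n + 1
  · rw [dif_pos h3]
    unfold degHankel
    by_cases h4 : i + 1 + c.val < n + 2
    · rw [dif_pos (show (⟨n + i - n, _⟩ : Fin n).val + (⟨c.val + 1, _⟩ : Fin (n+2)).val < n + 2
        by simp; omega), dif_pos (show (⟨i+1, h2⟩ : Fin n).val + (⟨c.val, hc⟩ : Fin (n+2)).val < n + 2 by simpa using h4)]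
      congr 1
      apply Fin.ext
      simp; omega
    · rw [dif_neg (by simp; omega), dif_neg (by simpa using h4)]
  · have h5 : c.val = n + 1 := by omega
    rw [dif_neg h3, dif_pos h5]
    unfold degHankel
    rw [dif_neg (by simp; omega)]

set_option maxHeartbeats 1000000 in
/-- For any choice of indices `a = {a_1,…,a_{n-2}}` of columns of the degenerate
Hankel matrix `H[n-1]`, the `2n × 2n` matrix `L_a` has determinant zero. -/
theorem stmt1 (K : Type*) [Field K] (n : ℕ) (hn : 2 ≤ n)
    (a : Fin (n - 2) → Fin (n + 2)) :
    (Lmat K n a).det = 0 := by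
  classical
  set R := MvPolynomial (Fin (n + 2)) K with hR
  let F := FractionRing R
  let φ : R →+* F := algebraMap R F
  have hφ : Function.Injective φ := IsFractionRing.injective R F
  set M : Matrix (Fin (2 * n)) (Fin (2 * n)) F := (Lmat K n a).map φ with hMdef
  suffices h : M.det = 0 by
    have h2 : φ ((Lmat K n a).det) = 0 := by
      rw [RingHom.map_det]; exact h
    have := hφ (h2.trans (map_zero φ).symm)
    simpa using this
  rw [← Matrix.exists_vecMul_eq_zero_iff]
  -- the "difference" vectors live in an (n-2)-dimensional space
  let E : Fin (n - 1) → Fin (n - 2) → F := fun i k =>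
    φ (degHankel K n ⟨i.val, by omega⟩ (a k))
  have hE : ¬ LinearIndependent F E := by
    intro h
    have h1 := h.fintype_card_le_finrank
    rw [Module.finrank_fin_fun] at h1
    simp only [Fintype.card_fin] at h1
    omega
  obtain ⟨g, hg, i0, hi0⟩ := Fintype.not_linearIndependent_iff.mp hE
  -- rows involved in the relation
  let rB : Fin (n - 1) → Fin (2 * n) := fun i => ⟨n + i.val, by have := i.2; omega⟩
  let rT : Fin (n - 1) → Fin (2 * n) := fun i => ⟨i.val + 1, by have := i.2; omega⟩
  let v : Fin (2 * n) → F :=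
    ∑ i : Fin (n - 1), g i • ((Pi.single (rB i) (1 : F) : Fin (2 * n) → F) - Pi.single (rT i) 1)
  have hvdef : v = ∑ i : Fin (n - 1),
      g i • ((Pi.single (rB i) (1 : F) : Fin (2 * n) → F) - Pi.single (rT i) 1) := rfl
  refine ⟨v, ?_, ?_⟩
  · -- v ≠ 0 : it equals g i0 at row rB i0
    intro hv
    apply hi0
    have := congrFun hv (rB i0)
    rw [show v (rB i0) = g i0 from ?_] at this
    · exact this
    · rw [hvdef, Finset.sum_apply]
      rw [Finset.sum_eq_single i0]
      · have hne : rT i0 ≠ rB i0 := by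
          intro h; have := congrArg Fin.val h; simp [rB, rT] at this; omega
        simp [Pi.single_apply, hne]
      · intro i _ hne
        have h1 : rB i ≠ rB i0 := by
          intro h; apply hne; have := congrArg Fin.val h
          simp [rB] at this; exact Fin.ext this
        have h2 : rT i ≠ rB i0 := by
          intro h; have := congrArg Fin.val h; simp [rB, rT] at this
          have := i.2; omega
        simp [Pi.single_apply, h1, h2]
      · intro h; exact absurd (Finset.mem_univ i0) h
  · -- v ᵥ* M = 0
    have hlin : Matrix.vecMul v M = ∑ i : Fin (n - 1), g i • (M (rB i) - M (rT i)) := by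
      rw [← Matrix.vecMulLinear_apply, hvdef, map_sum]
      refine Finset.sum_congr rfl fun i _ => ?_
      rw [map_smul, map_sub]
      simp [Matrix.vecMulLinear_apply, Matrix.single_one_vecMul]
      rfl
    show Matrix.vecMul v M = 0
    rw [hlin]
    funext c
    rw [Finset.sum_apply, Pi.zero_apply]
    by_cases hc : c.val < n + 2
    · -- on the first n+2 columns the two rows agree
      apply Finset.sum_eq_zero
      intro i _
      have heq : M (rB i) c = M (rT i) c := by
        show φ (Lmat K n a (rB i) c) = φ (Lmat K n a (rT i) c)
        congr 1
        have := Lmat_row_eq K n hn a i.val i.2 c hc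
        convert this using 2
      simp [heq]
    · -- on the remaining columns the relation ∑ g i • E i = 0 applies
      have hc2 : c.val - (n + 2) < n - 2 := by have := c.2; omega
      have key : ∀ i : Fin (n - 1), M (rB i) c - M (rT i) c = E i ⟨c.val - (n + 2), hc2⟩ := by
        intro i
        have hB : Lmat K n a (rB i) c
            = degHankel K n ⟨i.val, by have := i.2; omega⟩ (a ⟨c.val - (n + 2), hc2⟩) := by
          unfold Lmat
          rw [dif_neg (show ¬ (rB i).val < n by simp [rB])]
          rw [dif_neg (by omega), dif_neg (by omega)]
          congr 1
          · apply Fin.ext; simp [rB]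
        have hT : Lmat K n a (rT i) c = 0 := by
          unfold Lmat
          rw [dif_pos (show (rT i).val < n by have := i.2; simp [rT]; omega)]
          rw [dif_neg (by omega)]
        show φ (Lmat K n a (rB i) c) - φ (Lmat K n a (rT i) c) = _
        rw [hB, hT, map_zero, sub_zero]
      calc ∑ i : Fin (n - 1), (g i • (M (rB i) - M (rT i))) c
          = ∑ i : Fin (n - 1), g i • E i ⟨c.val - (n + 2), hc2⟩ := by
            refine Finset.sum_congr rfl fun i _ => ?_
            simp only [Pi.smul_apply, Pi.sub_apply]
            rw [key i]
        _ = (∑ i : Fin (n - 1), g i • E i) ⟨c.val - (n + 2), hc2⟩ := by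
            rw [Finset.sum_apply]; simp
        _ = 0 := by rw [hg]; simp
end

section
/- The Hankel matrix identity: the ideal of n-minors of the (n+1)×(n+1) generic Hankel matrix with the last r antidiagonal variables set to 0 equals the ideal of maximal minors (n-minors) of the n×(n+2) Hankel matrix with the same specialization, i.e. I_n(𝓗_{n+1,n+1}[r]) = I_n(𝓗_{n,n+2}[r]) for all r = 0,…,n−1. -/
open MvPolynomial

/-- The ideal of `t × t` minors of a matrix: generated by determinants of
submatrices obtained by choosing `t` rows and `t` columns (in increasing order). -/
noncomputable def minorsIdeal {R : Type*} [CommRing R] {l m : ℕ} (t : ℕ)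
    (M : Matrix (Fin l) (Fin m) R) : Ideal R :=
  Ideal.span { d : R | ∃ (f : Fin t → Fin l) (g : Fin t → Fin m),
    StrictMono f ∧ StrictMono g ∧ d = (M.submatrix f g).det }

/-- The coordinate section `𝓗_{l,m}[r]` of the generic `l × m` Hankel matrix:
the `(i,j)` entry (1-based) is `x_{i+j-1}` if `i+j-1 ≤ 2n+1-r`, and `0` otherwise,
over `S = K[x_1, …, x_{2n+1-r}]`. -/
noncomputable def hankelSection (K : Type*) [Field K] (n r l m : ℕ) :
    Matrix (Fin l) (Fin m) (MvPolynomial (Fin (2 * n + 1 - r)) K) :=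
  fun i j => if h : i.val + j.val < 2 * n + 1 - r
    then X (⟨i.val + j.val, h⟩ : Fin (2 * n + 1 - r)) else 0

namespace HankelAux

open Finset Matrix

variable {R : Type*} [CommRing R]

/-- determinant congruence for entrywise equal matrices -/
lemma det_congr' {n : ℕ} (M M' : Matrix (Fin n) (Fin n) R)
    (h : ∀ k l, M k l = M' k l) : M.det = M'.det := by
  have : M = M' := by funext k l; exact h k l
  rw [this]

/-- Counting lemma: a filter on `Fin n` by a predicate on values has the same card
as the corresponding filter on `range n`. -/
lemma card_filter_val (n : ℕ) (P : ℕ → Prop) [DecidablePred P] :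
    ((Finset.univ : Finset (Fin n)).filter (fun l => P l.val)).card
      = ((Finset.range n).filter P).card := by
  rw [← Finset.card_image_of_injective
    ((Finset.univ : Finset (Fin n)).filter (fun l => P l.val)) Fin.val_injective]
  congr 1
  ext m
  simp only [Finset.mem_image, Finset.mem_filter, Finset.mem_range, Finset.mem_univ, true_and]
  constructor
  · rintro ⟨a, ⟨hP, rfl⟩⟩; exact ⟨a.isLt, hP⟩
  · rintro ⟨hm, hP⟩; exact ⟨⟨m, hm⟩, hP, rfl⟩

lemma card_filter_ge (n b : ℕ) :
    ((Finset.univ : Finset (Fin n)).filter (fun l => b ≤ l.val)).card = n - b := by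
  rw [card_filter_val]
  have : (Finset.range n).filter (fun m => b ≤ m) = Finset.Ico b n := by
    ext m; simp only [Finset.mem_filter, Finset.mem_range, Finset.mem_Ico]; omega
  rw [this, Nat.card_Ico]

/-- card of the two-interval set -/
lemma card_F (n a b j : ℕ) (haj : a ≤ j) (hjb : j ≤ b) (hjn : j ≤ n) :
    ((Finset.univ : Finset (Fin n)).filter
      (fun l => (a ≤ l.val ∧ l.val < j) ∨ b ≤ l.val)).card = (j - a) + (n - b) := by
  rw [card_filter_val n (fun m => (a ≤ m ∧ m < j) ∨ b ≤ m)]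
  have hsplit : (Finset.range n).filter (fun m => (a ≤ m ∧ m < j) ∨ b ≤ m)
      = Finset.Ico a j ∪ Finset.Ico b n := by
    ext m
    simp only [Finset.mem_filter, Finset.mem_range, Finset.mem_union, Finset.mem_Ico]
    omega
  rw [hsplit, Finset.card_union_of_disjoint, Nat.card_Ico, Nat.card_Ico]
  rw [Finset.disjoint_left]
  intro m hm hm'
  simp only [Finset.mem_Ico] at hm hm'
  omega

/-- a down-closed subset of `Fin n` is an initial segment -/
lemma downclosed_iff (n : ℕ) (E : Finset (Fin n))
    (hdc : ∀ (i j : Fin n), i ≤ j → j ∈ E → i ∈ E) :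
    ∀ l : Fin n, l ∈ E ↔ l.val < E.card := by
  intro l
  constructor
  · intro hl
    have hsub : (Finset.univ : Finset (Fin n)).filter (fun i => i.val ≤ l.val) ⊆ E := by
      intro i hi
      simp only [Finset.mem_filter, Finset.mem_univ, true_and] at hi
      exact hdc i l (by exact Fin.le_def.mpr hi) hl
    have hcard : ((Finset.univ : Finset (Fin n)).filter (fun i => i.val ≤ l.val)).card
        = l.val + 1 := by
      rw [card_filter_val n (fun m => m ≤ l.val)]
      have : (Finset.range n).filter (fun m => m ≤ l.val) = Finset.range (l.val + 1) := by
        ext m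
        simp only [Finset.mem_filter, Finset.mem_range]
        have := l.isLt; omega
      rw [this, Finset.card_range]
    have := Finset.card_le_card hsub
    omega
  · intro hl
    by_contra hnot
    have hsub : E ⊆ (Finset.univ : Finset (Fin n)).filter (fun i => i.val < l.val) := by
      intro j hj
      simp only [Finset.mem_filter, Finset.mem_univ, true_and]
      by_contra hge
      push_neg at hge
      exact hnot (hdc l j (Fin.le_def.mpr hge) hj)
    have hcard : ((Finset.univ : Finset (Fin n)).filter (fun i => i.val < l.val)).card
        = l.val := by
      rw [card_filter_val n (fun m => m < l.val)]
      have : (Finset.range n).filter (fun m => m < l.val) = Finset.range l.val := by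
        ext m
        simp only [Finset.mem_filter, Finset.mem_range]
        have := l.isLt; omega
      rw [this, Finset.card_range]
    have := Finset.card_le_card hsub
    omega

section Master

variable (y : ℕ → R)

/-- Row-shift sums equal column-shift sums of generalized Hankel determinants. -/
lemma sum_det_rowcol (n : ℕ) (S : Fin n → ℕ) (w : ℕ) :
    ∑ E ∈ Finset.powersetCard w (Finset.univ : Finset (Fin n)),
      (Matrix.of fun k l : Fin n =>
        y (k.val + (if k ∈ E then 1 else 0) + S l)).det
    = ∑ E ∈ Finset.powersetCard w (Finset.univ : Finset (Fin n)),
      (Matrix.of fun k l : Fin n =>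
        y (k.val + S l + (if l ∈ E then 1 else 0))).det := by
  simp only [Matrix.det_apply, Matrix.of_apply]
  rw [Finset.sum_comm, Finset.sum_comm (s := Finset.powersetCard w Finset.univ)]
  refine Finset.sum_congr rfl fun σ _ => ?_
  rw [← Finset.smul_sum, ← Finset.smul_sum]
  congr 1
  refine Finset.sum_bij' (fun E _ => E.image σ.symm) (fun E _ => E.image σ) ?_ ?_ ?_ ?_ ?_
  · intro E hE
    simp only [Finset.mem_powersetCard] at hE ⊢
    exact ⟨Finset.subset_univ _, by rw [Finset.card_image_of_injective _ σ.symm.injective, hE.2]⟩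
  · intro E hE
    simp only [Finset.mem_powersetCard] at hE ⊢
    exact ⟨Finset.subset_univ _, by rw [Finset.card_image_of_injective _ σ.injective, hE.2]⟩
  · intro E _
    simp [Finset.image_image, Function.comp_def]
  · intro E _
    simp [Finset.image_image, Function.comp_def]
  · intro E _
    refine Finset.prod_congr rfl fun l _ => ?_
    congr 1
    have : (σ l ∈ E) ↔ (l ∈ E.image σ.symm) := by
      constructor
      · intro h; exact Finset.mem_image.mpr ⟨σ l, h, by simp⟩
      · intro h
        obtain ⟨a, ha, hal⟩ := Finset.mem_image.mp h
        have : a = σ l := by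
          have := congrArg σ hal; simpa using this
        rwa [← this]
    by_cases h : σ l ∈ E
    · rw [if_pos h, if_pos (this.mp h)]
      omega
    · rw [if_neg h, if_neg (fun hc => h (this.mpr hc))]
      omega

/-- In the sum over row-shift sets, only the up-closed set survives. -/
lemma sum_det_rowcollapse (n : ℕ) (S : Fin n → ℕ) (w : ℕ) (hw : w ≤ n) :
    ∑ E ∈ Finset.powersetCard w (Finset.univ : Finset (Fin n)),
      (Matrix.of fun k l : Fin n =>
        y (k.val + (if k ∈ E then 1 else 0) + S l)).det
    = (Matrix.of fun k l : Fin n =>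
        y (k.val + (if n - w ≤ k.val then 1 else 0) + S l)).det := by
  set E₀ : Finset (Fin n) := Finset.univ.filter (fun k => n - w ≤ k.val) with hE₀
  have hE₀card : E₀.card = w := by
    rw [hE₀, card_filter_ge]; omega
  have hE₀mem : E₀ ∈ Finset.powersetCard w (Finset.univ : Finset (Fin n)) := by
    simp only [Finset.mem_powersetCard]
    exact ⟨Finset.subset_univ _, hE₀card⟩
  rw [Finset.sum_eq_single_of_mem E₀ hE₀mem]
  · congr 1
    funext k l
    simp only [Matrix.of_apply, hE₀, Finset.mem_filter, Finset.mem_univ, true_and]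
  · intro E hE hne
    simp only [Finset.mem_powersetCard] at hE
    -- find a descent k ∈ E, k+1 ∉ E
    by_cases hdes : ∃ (m : ℕ) (hm : m + 1 < n),
        (⟨m, by omega⟩ : Fin n) ∈ E ∧ (⟨m + 1, hm⟩ : Fin n) ∉ E
    · obtain ⟨m, hm, hmem, hnot⟩ := hdes
      apply Matrix.det_zero_of_row_eq (i := (⟨m, by omega⟩ : Fin n)) (j := ⟨m + 1, hm⟩)
      · intro hc
        have := congrArg Fin.val hc
        simp at this
      · funext l
        simp only [Matrix.of_apply, if_pos hmem, if_neg hnot]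
    · -- E is up-closed, hence E = E₀, contradiction
      exfalso
      push_neg at hdes
      apply hne
      -- up-closedness: k ∈ E → any larger in E
      have hup : ∀ (i j : Fin n), i ≤ j → i ∈ E → j ∈ E := by
        have step : ∀ (m : ℕ) (hm : m + 1 < n),
            (⟨m, by omega⟩ : Fin n) ∈ E → (⟨m + 1, hm⟩ : Fin n) ∈ E := by
          intro m hm h
          exact hdes m hm h
        intro i j hij hi
        obtain ⟨d, hd⟩ : ∃ d, j.val = i.val + d := ⟨j.val - i.val, by omega⟩
        clear hij
        induction d generalizing j with
        | zero =>
            have : j = i := by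
              apply Fin.ext
              omega
            rwa [this]
        | succ d ih =>
            have hd' : i.val + d < n := by have := j.isLt; omega
            have hmem : (⟨i.val + d, hd'⟩ : Fin n) ∈ E := ih ⟨i.val + d, hd'⟩ rfl
            have hd'' : (i.val + d) + 1 < n := by have := j.isLt; omega
            have := step (i.val + d) hd'' hmem
            have hj : j = ⟨i.val + d + 1, hd''⟩ := by
              apply Fin.ext
              show j.val = i.val + d + 1
              omega
            rwa [hj]
      -- complement is down-closed
      have hdc : ∀ (i j : Fin n), i ≤ j → j ∈ Finset.univ.filter (fun k => k ∉ E)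
          → i ∈ Finset.univ.filter (fun k => k ∉ E) := by
        intro i j hij hj
        simp only [Finset.mem_filter, Finset.mem_univ, true_and] at hj ⊢
        intro hi
        exact hj (hup i j hij hi)
      have hiff := downclosed_iff n (Finset.univ.filter (fun k => k ∉ E)) hdc
      have hcardc : (Finset.univ.filter (fun k => k ∉ E)).card = n - w := by
        have := Finset.card_filter_add_card_filter_not (s := (Finset.univ : Finset (Fin n)))
          (p := fun k => k ∈ E)
        have h1 : Finset.univ.filter (fun k => k ∈ E) = E := by
          ext k; simp
        rw [h1] at this
        simp only [Finset.card_univ, Fintype.card_fin] at this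
        omega
      ext k
      rw [hE₀]
      simp only [Finset.mem_filter, Finset.mem_univ, true_and]
      have hk := hiff k
      simp only [Finset.mem_filter, Finset.mem_univ, true_and, hcardc] at hk
      have hiffE : k ∈ E ↔ ¬ k.val < n - w := by
        constructor
        · intro h hlt
          exact (hk.mpr hlt) h
        · intro h
          by_contra hc
          exact h (hk.mp hc)
      rw [hiffE]
      omega

/-- **Master identity**: a row-shifted Hankel-type determinant is the sum over all
column-shift patterns of fixed weight. -/
lemma master (n : ℕ) (S : Fin n → ℕ) (t : ℕ) (ht : t ≤ n) :
    (Matrix.of fun k l : Fin n =>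
        y (k.val + (if t ≤ k.val then 1 else 0) + S l)).det
    = ∑ E ∈ Finset.powersetCard (n - t) (Finset.univ : Finset (Fin n)),
      (Matrix.of fun k l : Fin n =>
        y (k.val + S l + (if l ∈ E then 1 else 0))).det := by
  have hnn : n - (n - t) = t := by omega
  rw [← sum_det_rowcol, sum_det_rowcollapse y n S (n - t) (by omega), hnn]

end Master

/-! ### Strictly monotone maps between `Fin` types -/

lemma strictMono_le {a b : ℕ} (f : Fin a → Fin b) (hf : StrictMono f) :
    ∀ k : Fin a, k.val ≤ (f k).val := by
  have key : ∀ (m : ℕ) (hm : m < a), m ≤ (f ⟨m, hm⟩).val := by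
    intro m
    induction m with
    | zero => intro _; omega
    | succ m ih =>
        intro hm
        have hm' : m < a := by omega
        have h1 := ih hm'
        have h2 : f ⟨m, hm'⟩ < f ⟨m + 1, hm⟩ := hf (by simp [Fin.mk_lt_mk])
        have := Fin.lt_def.mp h2
        omega
  intro k
  have := key k.val k.isLt
  simpa using this

lemma strictMono_ge {a b : ℕ} (f : Fin a → Fin b) (hf : StrictMono f) :
    ∀ k : Fin a, (f k).val ≤ k.val + (b - a) := by
  have hab : a ≤ b := by
    by_cases ha : a = 0
    · omega
    · have : Nonempty (Fin a) := ⟨⟨0, by omega⟩⟩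
      have := Fintype.card_le_of_injective f hf.injective
      simpa using this
  -- downward induction: f (a-1-d) ≤ (a-1-d) + (b-a)
  have key : ∀ (d : ℕ) (hd : d < a), (f ⟨a - 1 - d, by omega⟩).val ≤ (a - 1 - d) + (b - a) := by
    intro d
    induction d with
    | zero =>
        intro hd
        have := (f ⟨a - 1 - 0, by omega⟩).isLt
        omega
    | succ d ih =>
        intro hd
        have hd' : d < a := by omega
        have h1 := ih hd'
        have h2 : f ⟨a - 1 - (d + 1), by omega⟩ < f ⟨a - 1 - d, by omega⟩ :=
          hf (by simp [Fin.mk_lt_mk]; omega)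
        have := Fin.lt_def.mp h2
        omega
  intro k
  have hk : k.val < a := k.isLt
  have := key (a - 1 - k.val) (by omega)
  have hk2 : (⟨a - 1 - (a - 1 - k.val), by omega⟩ : Fin a) = k := by
    apply Fin.ext
    show a - 1 - (a - 1 - k.val) = k.val
    omega
  rw [hk2] at this
  omega

/-- Any map `Fin n → ℕ` that is adjacent-strictly-increasing with values in `[l, l+2]`
has a two-threshold description. -/
lemma exists_thresholds (n : ℕ) (c : Fin n → ℕ)
    (h0 : ∀ l : Fin n, l.val ≤ c l) (h2 : ∀ l : Fin n, c l ≤ l.val + 2)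
    (hmono : ∀ (m : ℕ) (hm : m + 1 < n), c ⟨m, by omega⟩ < c ⟨m + 1, hm⟩) :
    ∃ a b : ℕ, a ≤ b ∧ b ≤ n ∧
      ∀ l : Fin n, c l = l.val + (if a ≤ l.val then 1 else 0) + (if b ≤ l.val then 1 else 0) := by
  set d : Fin n → ℕ := fun l => c l - l.val with hd
  have hd2 : ∀ l, d l ≤ 2 := by intro l; have := h2 l; have := h0 l; simp only [hd]; omega
  have hdmono : ∀ (i j : Fin n), i ≤ j → d i ≤ d j := by
    have adj : ∀ (m : ℕ) (hm : m + 1 < n), d ⟨m, by omega⟩ ≤ d ⟨m + 1, hm⟩ := by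
      intro m hm
      have := hmono m hm
      have := h0 (⟨m, by omega⟩ : Fin n)
      have := h0 (⟨m + 1, hm⟩ : Fin n)
      simp only [hd]
      omega
    intro i j hij
    obtain ⟨e, he⟩ : ∃ e, j.val = i.val + e := ⟨j.val - i.val, by omega⟩
    clear hij
    induction e generalizing j with
    | zero =>
        have : j = i := by
          apply Fin.ext
          omega
        rw [this]
    | succ e ih =>
        have hie : i.val + e < n := by have := j.isLt; omega
        have h1 := ih ⟨i.val + e, hie⟩ rfl
        have hie' : (i.val + e) + 1 < n := by have := j.isLt; omega
        have h2' := adj (i.val + e) hie'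
        have hj : j = ⟨i.val + e + 1, hie'⟩ := by
          apply Fin.ext
          show j.val = i.val + e + 1
          omega
        rw [hj]
        exact le_trans h1 h2'
  -- zero set is down-closed
  set Z : Finset (Fin n) := Finset.univ.filter (fun l => d l = 0) with hZ
  have hZdc : ∀ (i j : Fin n), i ≤ j → j ∈ Z → i ∈ Z := by
    intro i j hij hj
    simp only [hZ, Finset.mem_filter, Finset.mem_univ, true_and] at hj ⊢
    have := hdmono i j hij
    omega
  have hZiff := downclosed_iff n Z hZdc
  -- "not-2" set is down-closed
  set F : Finset (Fin n) := Finset.univ.filter (fun l => d l ≠ 2) with hF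
  have hFdc : ∀ (i j : Fin n), i ≤ j → j ∈ F → i ∈ F := by
    intro i j hij hj
    simp only [hF, Finset.mem_filter, Finset.mem_univ, true_and] at hj ⊢
    have := hdmono i j hij
    have := hd2 j
    omega
  have hFiff := downclosed_iff n F hFdc
  refine ⟨Z.card, F.card, ?_, ?_, ?_⟩
  · apply Finset.card_le_card
    intro l hl
    simp only [hZ, Finset.mem_filter, Finset.mem_univ, true_and] at hl
    simp only [hF, Finset.mem_filter, Finset.mem_univ, true_and]
    omega
  · calc F.card ≤ (Finset.univ : Finset (Fin n)).card := Finset.card_le_card (Finset.subset_univ _)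
      _ = n := by simp
  · intro l
    have hZl := hZiff l
    have hFl := hFiff l
    simp only [hZ, hF, Finset.mem_filter, Finset.mem_univ, true_and] at hZl hFl
    have hcl : c l = l.val + d l := by simp only [hd]; have := h0 l; omega
    rw [hcl]
    have hdl2 := hd2 l
    by_cases hza : l.val < Z.card
    · have : d l = 0 := hZl.mpr hza
      have hzf : Z.card ≤ F.card := by
        apply Finset.card_le_card
        intro x hx
        simp only [hZ, Finset.mem_filter, Finset.mem_univ, true_and] at hx
        simp only [hF, Finset.mem_filter, Finset.mem_univ, true_and]
        omega
      rw [if_neg (by omega), if_neg (by omega)]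
      omega
    · by_cases hfb : l.val < F.card
      · have h1 : d l ≠ 0 := fun h => hza (hZl.mp h)
        have h2' : d l ≠ 2 := hFl.mpr hfb
        rw [if_pos (by omega), if_neg (by omega)]
        omega
      · have h2' : d l = 2 := by
          by_contra hc
          exact hfb (hFl.mp hc)
        rw [if_pos (by omega), if_pos (by omega)]
        omega


/-! ### Classification of surviving terms for the omit-one-column set -/

section Classify

variable (y : ℕ → R)

lemma classify (n p q : ℕ) (hpq : p < q) (hq : q ≤ n) :
    (Matrix.of fun k l : Fin n =>
        y (k.val + (if p ≤ k.val then 1 else 0)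
            + (l.val + if q ≤ l.val + 1 then 1 else 0))).det
    = ∑ a ∈ Finset.Icc (p + q - 1 - n) p,
      (Matrix.of fun k l : Fin n =>
        y (k.val + (l.val + (if a ≤ l.val then 1 else 0)
            + (if p + q - a ≤ l.val + 1 then 1 else 0)))).det := by
  have hpn : p ≤ n := by omega
  rw [master y n (fun l => l.val + if q ≤ l.val + 1 then 1 else 0) p hpn]
  set F : ℕ → Finset (Fin n) := fun a => Finset.univ.filter
      (fun l : Fin n => (a ≤ l.val ∧ l.val < q - 1) ∨ (p + q - 1 - a) ≤ l.val) with hF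
  have hFcard : ∀ a, p + q - 1 - n ≤ a → a ≤ p → (F a).card = n - p := by
    intro a h1 h2
    have : (F a).card = ((q - 1) - a) + (n - (p + q - 1 - a)) := by
      rw [hF]
      exact card_F n a (p + q - 1 - a) (q - 1) (by omega) (by omega) (by omega)
    omega
  have hFmem : ∀ a ∈ Finset.Icc (p + q - 1 - n) p,
      F a ∈ Finset.powersetCard (n - p) (Finset.univ : Finset (Fin n)) := by
    intro a ha
    rw [Finset.mem_Icc] at ha
    simp only [Finset.mem_powersetCard]
    exact ⟨Finset.subset_univ _, hFcard a ha.1 ha.2⟩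
  have hFlow : ∀ a, a ≤ p → ∀ l : Fin n, l.val < a → l ∉ F a := by
    intro a ha l hl
    simp only [hF, Finset.mem_filter, Finset.mem_univ, true_and]
    push_neg
    exact ⟨fun h => by omega, by omega⟩
  have hFself : ∀ a, a ≤ p → ∀ (h : a < n), (⟨a, h⟩ : Fin n) ∈ F a := by
    intro a ha h
    simp only [hF, Finset.mem_filter, Finset.mem_univ, true_and]
    show (a ≤ a ∧ a < q - 1) ∨ p + q - 1 - a ≤ a
    omega
  have hzero : ∀ E ∈ Finset.powersetCard (n - p) (Finset.univ : Finset (Fin n)),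
      E ∉ (Finset.Icc (p + q - 1 - n) p).image F →
      (Matrix.of fun k l : Fin n =>
        y (k.val + (l.val + if q ≤ l.val + 1 then 1 else 0)
          + (if l ∈ E then 1 else 0))).det = 0 := by
    intro E hE hEim
    simp only [Finset.mem_powersetCard] at hE
    set c : Fin n → ℕ :=
      fun l => (l.val + if q ≤ l.val + 1 then 1 else 0) + (if l ∈ E then 1 else 0) with hc
    by_cases hadj : ∃ (i j : Fin n), i.val + 1 = j.val ∧ c i = c j
    · obtain ⟨i, j, hij, heq⟩ := hadj
      apply Matrix.det_zero_of_column_eq (i := i) (j := j)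
      · intro hcon
        rw [hcon] at hij
        omega
      · intro k
        simp only [Matrix.of_apply]
        have hci : c i = (i.val + if q ≤ i.val + 1 then 1 else 0) + (if i ∈ E then 1 else 0) := rfl
        have hcj : c j = (j.val + if q ≤ j.val + 1 then 1 else 0) + (if j ∈ E then 1 else 0) := rfl
        congr 1
        omega
    · exfalso
      push_neg at hadj
      have hc0 : ∀ l : Fin n, l.val ≤ c l := by
        intro l
        have hcl : c l = (l.val + if q ≤ l.val + 1 then 1 else 0) + (if l ∈ E then 1 else 0) := rfl
        omega
      have hc2 : ∀ l : Fin n, c l ≤ l.val + 2 := by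
        intro l
        have hcl : c l = (l.val + if q ≤ l.val + 1 then 1 else 0) + (if l ∈ E then 1 else 0) := rfl
        have e1 : (if q ≤ l.val + 1 then (1:ℕ) else 0) ≤ 1 := by split_ifs <;> omega
        have e2 : (if l ∈ E then (1:ℕ) else 0) ≤ 1 := by split_ifs <;> omega
        omega
      have hcmono : ∀ (m : ℕ) (hm : m + 1 < n), c ⟨m, by omega⟩ < c ⟨m + 1, hm⟩ := by
        intro m hm
        have key : ∀ (i j : Fin n), i.val + 1 = j.val → c i < c j := by
          intro i j hij
          have hne := hadj i j hij
          have hci : c i = (i.val + if q ≤ i.val + 1 then 1 else 0) + (if i ∈ E then 1 else 0) := rfl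
          have hcj : c j = (j.val + if q ≤ j.val + 1 then 1 else 0) + (if j ∈ E then 1 else 0) := rfl
          have e1 : (if q ≤ i.val + 1 then (1:ℕ) else 0) ≤ (if q ≤ j.val + 1 then 1 else 0) := by
            split_ifs <;> omega
          have e2 : (if i ∈ E then (1:ℕ) else 0) ≤ 1 := by split_ifs <;> omega
          have e3 : (0:ℕ) ≤ (if j ∈ E then 1 else 0) := by omega
          omega
        exact key _ _ rfl
      obtain ⟨a, b, hab, hbn, hform⟩ := exists_thresholds n c hc0 hc2 hcmono
      have haq : a ≤ q - 1 := by
        by_contra hcon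
        push_neg at hcon
        have key : ∀ i : Fin n, i.val = q - 1 → False := by
          intro i hi
          have h1 := hform i
          have h2 : c i = (i.val + if q ≤ i.val + 1 then 1 else 0) + (if i ∈ E then 1 else 0) := rfl
          have e2 : (if i ∈ E then (1:ℕ) else 0) ≤ 1 := by split_ifs <;> omega
          rw [hi] at h1 h2
          rw [if_neg (by omega), if_neg (by omega)] at h1
          rw [if_pos (by omega)] at h2
          omega
        exact key ⟨q - 1, by omega⟩ rfl
      have hqb : q - 1 ≤ b := by
        by_contra hcon
        push_neg at hcon
        have key : ∀ i : Fin n, i.val = b → False := by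
          intro i hi
          have h1 := hform i
          have h2 : c i = (i.val + if q ≤ i.val + 1 then 1 else 0) + (if i ∈ E then 1 else 0) := rfl
          have e2 : (if i ∈ E then (1:ℕ) else 0) ≤ 1 := by split_ifs <;> omega
          rw [hi] at h1 h2
          rw [if_pos (by omega), if_pos (by omega)] at h1
          rw [if_neg (by omega)] at h2
          omega
        exact key ⟨b, by omega⟩ rfl
      have hEdesc : E = Finset.univ.filter
          (fun l : Fin n => (a ≤ l.val ∧ l.val < q - 1) ∨ b ≤ l.val) := by
        ext l
        simp only [Finset.mem_filter, Finset.mem_univ, true_and]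
        have h1 := hform l
        have h2 : c l = (l.val + if q ≤ l.val + 1 then 1 else 0) + (if l ∈ E then 1 else 0) := rfl
        constructor
        · intro hlE
          rw [if_pos hlE] at h2
          split_ifs at h1 h2 <;> omega
        · intro hcon
          by_contra hlE
          rw [if_neg hlE] at h2
          split_ifs at h1 h2 <;> omega
      have hcount : (q - 1 - a) + (n - b) = n - p := by
        have hcE := hE.2
        rw [hEdesc, card_F n a b (q - 1) haq hqb (by omega)] at hcE
        omega
      apply hEim
      rw [Finset.mem_image]
      refine ⟨a, ?_, ?_⟩
      · rw [Finset.mem_Icc]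
        omega
      · have hb : p + q - 1 - a = b := by omega
        rw [hEdesc]
        simp only [hF]
        rw [hb]
  have hsub : (Finset.Icc (p + q - 1 - n) p).image F ⊆
      Finset.powersetCard (n - p) (Finset.univ : Finset (Fin n)) := by
    intro E hE
    rw [Finset.mem_image] at hE
    obtain ⟨a, ha, rfl⟩ := hE
    exact hFmem a ha
  rw [← Finset.sum_subset hsub (fun E hE hE' => hzero E hE hE')]
  rw [Finset.sum_image ?hinj]
  case hinj =>
    intro a ha a' ha' heq
    rw [Finset.mem_coe, Finset.mem_Icc] at ha ha'
    by_contra hne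
    rcases Nat.lt_or_ge a a' with h | h
    · have h1 := hFself a ha.2 (by omega)
      rw [heq] at h1
      exact (hFlow a' ha'.2 ⟨a, by omega⟩ h) h1
    · have h' : a' < a := by omega
      have h1 := hFself a' ha'.2 (by omega)
      rw [← heq] at h1
      exact (hFlow a ha.2 ⟨a', by omega⟩ h') h1
  refine Finset.sum_congr rfl fun a ha => ?_
  rw [Finset.mem_Icc] at ha
  apply det_congr'
  intro k l
  simp only [Matrix.of_apply]
  have hmem : l ∈ F a ↔ ((a ≤ l.val ∧ l.val < q - 1) ∨ p + q - 1 - a ≤ l.val) := by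
    simp only [hF, Finset.mem_filter, Finset.mem_univ, true_and]
  congr 1
  by_cases hm : l ∈ F a
  · rw [if_pos hm]
    have hp' := hmem.mp hm
    split_ifs <;> omega
  · rw [if_neg hm]
    have hp' : ¬ ((a ≤ l.val ∧ l.val < q - 1) ∨ p + q - 1 - a ≤ l.val) :=
      fun hcon => hm (hmem.mpr hcon)
    split_ifs <;> omega

end Classify

/-! ### chained strict monotonicity from adjacent -/

lemma strictMono_of_adj (n : ℕ) (c : Fin n → ℕ)
    (h : ∀ (m : ℕ) (hm : m + 1 < n), c ⟨m, by omega⟩ < c ⟨m + 1, hm⟩) :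
    ∀ i j : Fin n, i < j → c i < c j := by
  intro i j hij
  obtain ⟨e, he⟩ : ∃ e, j.val = i.val + (e + 1) := ⟨j.val - i.val - 1, by
    have := Fin.lt_def.mp hij; omega⟩
  clear hij
  induction e generalizing j with
  | zero =>
      have hlt : i.val + 1 < n := by have := j.isLt; omega
      have := h i.val (by omega)
      have hj : j = ⟨i.val + 1, by omega⟩ := by
        apply Fin.ext
        show j.val = i.val + 1
        omega
      rw [hj]
      exact this
  | succ e ih =>
      have hie : i.val + (e + 1) < n := by have := j.isLt; omega
      have h1 := ih ⟨i.val + (e + 1), hie⟩ rfl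
      have hie' : (i.val + (e + 1)) + 1 < n := by have := j.isLt; omega
      have h2 := h (i.val + (e + 1)) hie'
      have hj : j = ⟨i.val + (e + 1) + 1, hie'⟩ := by
        apply Fin.ext
        show j.val = i.val + (e + 1) + 1
        omega
      rw [hj]
      exact lt_trans h1 h2

/-! ### membership of pure minors in the square-matrix minor ideal -/

lemma NB_mem (y : ℕ → R) (n : ℕ) :
    ∀ (fuel p q : ℕ), p < q → q ≤ n + 1 → n + 1 - q ≤ fuel →
    (Matrix.of fun k l : Fin n =>
        y (k.val + (l.val + (if p ≤ l.val then 1 else 0)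
          + (if q ≤ l.val + 1 then 1 else 0)))).det
      ∈ minorsIdeal n (Matrix.of fun i j : Fin (n+1) => y (i.val + j.val)) := by
  intro fuel
  induction fuel with
  | zero =>
      intro p q hpq hq hfuel
      have hq' : q = n + 1 := by omega
      subst hq'
      -- direct generator: delete last row
      apply Ideal.subset_span
      refine ⟨fun k => ⟨k.val, by omega⟩,
        fun l => ⟨l.val + (if p ≤ l.val then 1 else 0), by have := l.isLt; split_ifs <;> omega⟩,
        ?_, ?_, ?_⟩
      · intro i j hij
        have := Fin.lt_def.mp hij
        exact Fin.mk_lt_mk.mpr this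
      · intro i j hij
        have := Fin.lt_def.mp hij
        apply Fin.mk_lt_mk.mpr
        split_ifs <;> omega
      · apply det_congr'
        intro k l
        simp only [Matrix.of_apply, Matrix.submatrix_apply]
        congr 1
        show k.val + (l.val + (if p ≤ l.val then 1 else 0)
            + (if n + 1 ≤ l.val + 1 then 1 else 0))
          = k.val + (l.val + (if p ≤ l.val then 1 else 0))
        have h0 : (if n + 1 ≤ l.val + 1 then (1:ℕ) else 0) = 0 :=
          if_neg (by have := l.isLt; omega)
        omega
  | succ fuel ih =>
      intro p q hpq hq hfuel
      by_cases hq' : q = n + 1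
      · subst hq'
        apply Ideal.subset_span
        refine ⟨fun k => ⟨k.val, by omega⟩,
          fun l => ⟨l.val + (if p ≤ l.val then 1 else 0), by have := l.isLt; split_ifs <;> omega⟩,
          ?_, ?_, ?_⟩
        · intro i j hij
          have := Fin.lt_def.mp hij
          exact Fin.mk_lt_mk.mpr this
        · intro i j hij
          have := Fin.lt_def.mp hij
          apply Fin.mk_lt_mk.mpr
          split_ifs <;> omega
        · apply det_congr'
          intro k l
          simp only [Matrix.of_apply, Matrix.submatrix_apply]
          congr 1
          show k.val + (l.val + (if p ≤ l.val then 1 else 0)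
              + (if n + 1 ≤ l.val + 1 then 1 else 0))
            = k.val + (l.val + (if p ≤ l.val then 1 else 0))
          have h0 : (if n + 1 ≤ l.val + 1 then (1:ℕ) else 0) = 0 :=
            if_neg (by have := l.isLt; omega)
          omega
      · -- q ≤ n : use the classification identity
        have hqn : q ≤ n := by omega
        have hkey := classify y n p q hpq hqn
        have hp_mem : p ∈ Finset.Icc (p + q - 1 - n) p := by
          rw [Finset.mem_Icc]; omega
        have hsplit := Finset.add_sum_erase _ (fun a =>
          (Matrix.of fun k l : Fin n =>
            y (k.val + (l.val + (if a ≤ l.val then 1 else 0)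
              + (if p + q - a ≤ l.val + 1 then 1 else 0)))).det) hp_mem
        have hgoal_eq : (Matrix.of fun k l : Fin n =>
            y (k.val + (l.val + (if p ≤ l.val then 1 else 0)
              + (if q ≤ l.val + 1 then 1 else 0)))).det
          = (Matrix.of fun k l : Fin n =>
            y (k.val + (l.val + (if p ≤ l.val then 1 else 0)
              + (if p + q - p ≤ l.val + 1 then 1 else 0)))).det := by
          apply det_congr'
          intro k l
          simp only [Matrix.of_apply]
          congr 2
          have : p + q - p = q := by omega
          rw [this]
        rw [hgoal_eq]
        have heq2 : (Matrix.of fun k l : Fin n =>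
            y (k.val + (l.val + (if p ≤ l.val then 1 else 0)
              + (if p + q - p ≤ l.val + 1 then 1 else 0)))).det
          = (Matrix.of fun k l : Fin n =>
              y (k.val + (if p ≤ k.val then 1 else 0)
                + (l.val + if q ≤ l.val + 1 then 1 else 0))).det
            - ∑ a ∈ (Finset.Icc (p + q - 1 - n) p).erase p,
              (Matrix.of fun k l : Fin n =>
                y (k.val + (l.val + (if a ≤ l.val then 1 else 0)
                  + (if p + q - a ≤ l.val + 1 then 1 else 0)))).det := by
          rw [hkey]
          rw [← hsplit]
          ring
        rw [heq2]
        apply Ideal.sub_mem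
        · -- the shifted-row determinant is a generator
          apply Ideal.subset_span
          refine ⟨fun k => ⟨k.val + (if p ≤ k.val then 1 else 0),
              by have := k.isLt; split_ifs <;> omega⟩,
            fun l => ⟨l.val + (if q ≤ l.val + 1 then 1 else 0),
              by have := l.isLt; split_ifs <;> omega⟩, ?_, ?_, ?_⟩
          · intro i j hij
            have := Fin.lt_def.mp hij
            apply Fin.mk_lt_mk.mpr
            split_ifs <;> omega
          · intro i j hij
            have := Fin.lt_def.mp hij
            apply Fin.mk_lt_mk.mpr
            split_ifs <;> omega
          · exact det_congr' _ _ (fun k l => rfl)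
        · apply Ideal.sum_mem
          intro a ha
          have ha' := Finset.mem_of_mem_erase ha
          have hane := Finset.ne_of_mem_erase ha
          rw [Finset.mem_Icc] at ha'
          exact ih a (p + q - a) (by omega) (by omega) (by omega)

end HankelAux

/-- `I_n(𝓗_{n+1,n+1}[r]) = I_n(𝓗_{n,n+2}[r])` for all `r = 0, …, n-1`:
the ideal of `n`-minors of the degenerated `(n+1) × (n+1)` Hankel matrix equals
the ideal of maximal minors of the degenerated `n × (n+2)` Hankel matrix. -/
theorem stmt2 (K : Type*) [Field K] (n r : ℕ) (hn : 1 ≤ n) (hr : r < n) :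
    minorsIdeal n (hankelSection K n r (n + 1) (n + 1))
      = minorsIdeal n (hankelSection K n r n (n + 2)) := by
  classical
  set y : ℕ → MvPolynomial (Fin (2 * n + 1 - r)) K :=
    fun m => if h : m < 2 * n + 1 - r then X ⟨m, h⟩ else 0 with hy
  have hAeq : hankelSection K n r (n + 1) (n + 1)
      = Matrix.of fun i j : Fin (n + 1) => y (i.val + j.val) := rfl
  have hBeq : hankelSection K n r n (n + 2)
      = Matrix.of fun (i : Fin n) (j : Fin (n + 2)) => y (i.val + j.val) := rfl
  apply le_antisymm
  · -- I_A ≤ I_B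
    unfold minorsIdeal
    rw [Ideal.span_le]
    rintro d ⟨f, g, hf, hg, rfl⟩
    have hle := HankelAux.strictMono_le f hf
    have hge := HankelAux.strictMono_ge f hf
    have hmono : ∀ (m : ℕ) (hm : m + 1 < n),
        (fun k : Fin n => (f k).val) ⟨m, by omega⟩ < (fun k : Fin n => (f k).val) ⟨m + 1, hm⟩ := by
      intro m hm
      exact Fin.lt_def.mp (hf (Fin.mk_lt_mk.mpr (by omega)))
    obtain ⟨a, b, hab, hbn, hform⟩ := HankelAux.exists_thresholds n (fun k => (f k).val)
      (fun l => hle l) (fun l => by have := hge l; show (f l).val ≤ l.val + 2; omega) hmono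
    have hform' : ∀ k : Fin n, (f k).val
        = k.val + (if a ≤ k.val then 1 else 0) + (if b ≤ k.val then 1 else 0) :=
      fun k => hform k
    have hb0 : ∀ l : Fin n, ¬ (b ≤ l.val) := by
      intro l hcon
      have h1 := hform' l
      have h2 := hge l
      rw [if_pos (by omega), if_pos hcon] at h1
      omega
    have han : a ≤ n := by omega
    have hdet : ((hankelSection K n r (n + 1) (n + 1)).submatrix f g).det
        = (Matrix.of fun k l : Fin n =>
            y (k.val + (if a ≤ k.val then 1 else 0) + (fun l' : Fin n => (g l').val) l)).det := by
      apply HankelAux.det_congr'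
      intro k l
      rw [hAeq]
      simp only [Matrix.submatrix_apply, Matrix.of_apply]
      congr 1
      show (f k).val + (g l).val = k.val + (if a ≤ k.val then 1 else 0) + (g l).val
      have h1 := hform' k
      have h2 : (if b ≤ k.val then (1:ℕ) else 0) = 0 := if_neg (hb0 k)
      omega
    rw [hdet, HankelAux.master y n (fun l' : Fin n => (g l').val) a han]
    apply Ideal.sum_mem
    intro E hE
    by_cases hadj : ∃ (i j : Fin n), i.val + 1 = j.val ∧
        (g i).val + (if i ∈ E then 1 else 0) = (g j).val + (if j ∈ E then 1 else 0)
    · obtain ⟨i, j, hij, heq⟩ := hadj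
      have hz : (Matrix.of fun k l : Fin n =>
          y (k.val + (fun l' : Fin n => (g l').val) l + (if l ∈ E then 1 else 0))).det = 0 := by
        apply Matrix.det_zero_of_column_eq (i := i) (j := j)
        · intro hcon; rw [hcon] at hij; omega
        · intro k
          simp only [Matrix.of_apply]
          congr 1
          show k.val + (g i).val + (if i ∈ E then 1 else 0)
            = k.val + (g j).val + (if j ∈ E then 1 else 0)
          omega
      rw [hz]
      exact Ideal.zero_mem _
    · push_neg at hadj
      have hgge := HankelAux.strictMono_ge g hg
      have hcmono : ∀ i j : Fin n, i < j →
          (g i).val + (if i ∈ E then 1 else 0) < (g j).val + (if j ∈ E then 1 else 0) := by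
        apply HankelAux.strictMono_of_adj n
          (fun l : Fin n => (g l).val + (if l ∈ E then 1 else 0))
        intro m hm
        have key : ∀ (i j : Fin n), i.val + 1 = j.val →
            (g i).val + (if i ∈ E then 1 else 0) < (g j).val + (if j ∈ E then 1 else 0) := by
          intro i j hij
          have hne := hadj i j hij
          have hlt : (g i).val < (g j).val := Fin.lt_def.mp (hg (Fin.lt_def.mpr (by omega)))
          have e2 : (if i ∈ E then (1:ℕ) else 0) ≤ 1 := by split_ifs <;> omega
          have e3 : (0:ℕ) ≤ (if j ∈ E then 1 else 0) := by omega
          omega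
        exact key _ _ rfl
      apply Ideal.subset_span
      refine ⟨fun k => k, fun l =>
          ⟨(g l).val + (if l ∈ E then 1 else 0), by
            have h1 := hgge l
            have := l.isLt
            have e2 : (if l ∈ E then (1:ℕ) else 0) ≤ 1 := by split_ifs <;> omega
            omega⟩, strictMono_id, ?_, ?_⟩
      · intro i j hij
        exact Fin.mk_lt_mk.mpr (hcmono i j hij)
      · apply HankelAux.det_congr'
        intro k l
        rw [hBeq]
        simp only [Matrix.submatrix_apply, Matrix.of_apply]
        congr 1
        show k.val + (g l).val + (if l ∈ E then 1 else 0)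
          = k.val + ((g l).val + (if l ∈ E then 1 else 0))
        omega
  · -- I_B ≤ I_A
    unfold minorsIdeal
    rw [Ideal.span_le]
    rintro d ⟨f, g, hf, hg, rfl⟩
    have hfid : ∀ k, f k = k := by
      intro k
      have h1 := HankelAux.strictMono_le f hf k
      have h2 := HankelAux.strictMono_ge f hf k
      apply Fin.ext
      omega
    have hgle := HankelAux.strictMono_le g hg
    have hgge := HankelAux.strictMono_ge g hg
    have hmono : ∀ (m : ℕ) (hm : m + 1 < n),
        (fun l : Fin n => (g l).val) ⟨m, by omega⟩ < (fun l : Fin n => (g l).val) ⟨m + 1, hm⟩ := by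
      intro m hm
      exact Fin.lt_def.mp (hg (Fin.mk_lt_mk.mpr (by omega)))
    obtain ⟨a, b, hab, hbn, hform⟩ := HankelAux.exists_thresholds n (fun l => (g l).val)
      (fun l => hgle l) (fun l => by have := hgge l; show (g l).val ≤ l.val + 2; omega) hmono
    have hform' : ∀ l : Fin n, (g l).val
        = l.val + (if a ≤ l.val then 1 else 0) + (if b ≤ l.val then 1 else 0) :=
      fun l => hform l
    have hdet : ((hankelSection K n r n (n + 2)).submatrix f g).det
        = (Matrix.of fun k l : Fin n =>
            y (k.val + (l.val + (if a ≤ l.val then 1 else 0)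
              + (if (b + 1) ≤ l.val + 1 then 1 else 0)))).det := by
      apply HankelAux.det_congr'
      intro k l
      rw [hBeq]
      simp only [Matrix.submatrix_apply, Matrix.of_apply]
      rw [hfid k]
      congr 1
      have h1 := hform' l
      have e1 : (if b + 1 ≤ l.val + 1 then (1:ℕ) else 0) = (if b ≤ l.val then 1 else 0) := by
        split_ifs <;> omega
      omega
    rw [hdet]
    have hmem := HankelAux.NB_mem y n (n + 1) a (b + 1) (by omega) (by omega) (by omega)
    have hid : (Matrix.of fun i j : Fin (n + 1) => y (i.val + j.val))
        = hankelSection K n r (n + 1) (n + 1) := hAeq.symm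
    rw [hid] at hmem
    exact hmem
end

section
/- For an n×(n+2) matrix M over a commutative ring, a subset I of column indices with |I| = n−2, and four remaining distinct indices a < b < c < d, the three-term Plücker relation holds among the maximal minors: [I∪{a,b}][I∪{c,d}] − [I∪{a,c}][I∪{b,d}] + [I∪{a,d}][I∪{b,c}] = 0. -/
/-- The maximal minor of an `n × (n+2)` matrix `M` on a set `J` of `n` columns,
taken in increasing order (junk value `0` if `J` does not have `n` elements). -/
noncomputable def maxMinor {R : Type*} [CommRing R] {n : ℕ}
    (M : Matrix (Fin n) (Fin (n + 2)) R) (J : Finset (Fin (n + 2))) : R :=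
  if h : J.card = n then (M.submatrix id (J.orderEmbOfFin h)).det else 0

open Matrix Equiv Finset in
lemma plucker_syzygy {R : Type*} [CommRing R] {k : ℕ}
    (f : (Fin (k+1) → R) →ₗ[R] R) (w : Fin (k+2) → Fin (k+1) → R) :
    ∑ j : Fin (k+2), (-1:R)^(j:ℕ) * f (w j) *
      (Matrix.of fun i j' => w (j.succAbove j') i).det = 0 := by
  set B : Matrix (Fin (k+2)) (Fin (k+2)) R :=
    Matrix.of (fun i j => Fin.lastCases (f (w j)) (fun i' => w j i') i) with hB
  set c : Fin (k+2) → R :=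
    Fin.lastCases 0 (fun i' => f (fun j => if i' = j then 1 else 0)) with hc
  have hrow : B (Fin.last (k+1)) = ∑ i : Fin (k+2), c i • B i := by
    funext j
    have h1 : B (Fin.last (k+1)) j = f (w j) := by simp [hB]
    have h2 := LinearMap.pi_apply_eq_sum_univ f (w j)
    rw [Finset.sum_apply, Fin.sum_univ_castSucc, h1, h2]
    simp [hB, hc, mul_comm]
  have hdet0 : B.det = 0 := by
    have h2 : B = B.updateRow (Fin.last (k+1)) (∑ i : Fin (k+2), c i • B i) := by
      rw [← hrow, Matrix.updateRow_eq_self]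
    have h3 := Matrix.det_updateRow_sum B (Fin.last (k+1)) c
    rw [← h2] at h3
    simpa [hc] using h3
  have hexp := Matrix.det_succ_row B (Fin.last (k+1))
  rw [hdet0] at hexp
  have hsub : ∀ j : Fin (k+2),
      (B.submatrix (Fin.last (k+1)).succAbove j.succAbove)
        = Matrix.of fun i j' => w (j.succAbove j') i := by
    intro j
    ext i j'
    simp [hB, Fin.succAbove_last]
  have hterm : ∀ j : Fin (k+2),
      (-1:R) ^ ((Fin.last (k+1) : Fin (k+2)) + j : ℕ) * B (Fin.last (k+1)) j *
        (B.submatrix (Fin.last (k+1)).succAbove j.succAbove).det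
      = (-1:R)^(k+1) * ((-1:R)^(j:ℕ) * f (w j) *
          (Matrix.of fun i j' => w (j.succAbove j') i).det) := by
    intro j
    rw [hsub j]
    have : ((Fin.last (k+1) : Fin (k+2)) + j : ℕ) = (k+1) + (j:ℕ) := by simp
    rw [this, pow_add]
    have hB2 : B (Fin.last (k+1)) j = f (w j) := by simp [hB]
    rw [hB2]; ring
  rw [Finset.sum_congr rfl (fun j _ => hterm j), ← Finset.mul_sum] at hexp
  have hu : ((-1:R)^(k+1)) * ((-1:R)^(k+1)) = 1 := by
    rw [← pow_add, Even.neg_one_pow ⟨k+1, rfl⟩]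
  calc ∑ j : Fin (k+2), (-1:R)^(j:ℕ) * f (w j) *
          (Matrix.of fun i j' => w (j.succAbove j') i).det
      = ((-1:R)^(k+1) * (-1:R)^(k+1)) * ∑ j : Fin (k+2), (-1:R)^(j:ℕ) * f (w j) *
          (Matrix.of fun i j' => w (j.succAbove j') i).det := by rw [hu, one_mul]
    _ = (-1:R)^(k+1) * ((-1:R)^(k+1) * ∑ j : Fin (k+2), (-1:R)^(j:ℕ) * f (w j) *
          (Matrix.of fun i j' => w (j.succAbove j') i).det) := by ring
    _ = 0 := by rw [← hexp, mul_zero]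

open Finset in
lemma orderEmbOfFin_lt_iff {N k : ℕ} (s : Finset (Fin N)) (h : s.card = k)
    (y : Fin N) (i' : Fin k) :
    s.orderEmbOfFin h i' < y ↔ (i' : ℕ) < (s.filter (· < y)).card := by
  set e := s.orderEmbOfFin h with he
  set P : Finset (Fin k) := Finset.univ.filter (fun i => e i < y) with hP
  have hPcard : P.card = (s.filter (· < y)).card := by
    have himg : P.image e = s.filter (· < y) := by
      ext t
      simp only [hP, Finset.mem_image, Finset.mem_filter, Finset.mem_univ, true_and]
      constructor
      · rintro ⟨i, hi, rfl⟩
        exact ⟨Finset.orderEmbOfFin_mem s h i, hi⟩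
      · rintro ⟨hts, hty⟩
        have : t ∈ Set.range ⇑e := by rw [Finset.range_orderEmbOfFin]; exact hts
        obtain ⟨i, rfl⟩ := this
        exact ⟨i, hty, rfl⟩
    rw [← himg, Finset.card_image_of_injective _ (s.orderEmbOfFin h).injective]
  have hdc : ∀ i₁ i₂ : Fin k, i₁ ≤ i₂ → i₂ ∈ P → i₁ ∈ P := by
    intro i₁ i₂ h12 h2
    simp only [hP, Finset.mem_filter, Finset.mem_univ, true_and] at h2 ⊢
    exact lt_of_le_of_lt ((s.orderEmbOfFin h).monotone h12) h2
  rw [← hPcard]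
  constructor
  · intro hlt
    have hsub : Finset.Iic i' ⊆ P := fun t ht =>
      hdc t i' (Finset.mem_Iic.mp ht) (by simp [hP, hlt])
    have := Finset.card_le_card hsub
    rw [Fin.card_Iic] at this
    omega
  · intro hlt
    by_contra hge
    have hsub : P ⊆ Finset.Iio i' := by
      intro t ht
      rw [Finset.mem_Iio]
      by_contra htge
      exact hge (by simpa [hP] using hdc i' t (not_lt.mp htge) ht)
    have := Finset.card_le_card hsub
    rw [Fin.card_Iio] at this
    omega

open Finset in
lemma orderEmbOfFin_insert {N k : ℕ} (s : Finset (Fin N)) (h : s.card = k)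
    (y : Fin N) (hy : y ∉ s) (h' : (insert y s).card = k + 1)
    (j : Fin (k+1)) (hj : (j : ℕ) = (s.filter (· < y)).card) :
    ⇑((insert y s).orderEmbOfFin h') =
      Fin.cons y ⇑(s.orderEmbOfFin h) ∘ ⇑(Fin.cycleRange j) := by
  set e := s.orderEmbOfFin h with he
  set g : Fin (k+1) → Fin N := Fin.cons y ⇑e ∘ ⇑(Fin.cycleRange j) with hg
  have hvk : ∀ i : Fin (k+1), i < j → (i : ℕ) < k := by
    intro i hij
    have := j.isLt
    have : (i:ℕ) < (j:ℕ) := hij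
    omega
  have hlt : ∀ (i : Fin (k+1)) (hij : i < j), g i = e ⟨(i:ℕ), hvk i hij⟩ := by
    intro i hij
    have h1 : i + 1 = Fin.succ ⟨(i:ℕ), hvk i hij⟩ := by
      ext
      rw [Fin.val_add_one_of_lt]
      · simp
      · exact lt_of_lt_of_le hij (Fin.le_last j)
    simp only [hg, Function.comp_apply, Fin.cycleRange_of_lt hij, h1, Fin.cons_succ]
  have heq : g j = y := by
    simp only [hg, Function.comp_apply, Fin.cycleRange_self, Fin.cons_zero]
  have hne0 : ∀ i : Fin (k+1), j < i → i ≠ 0 := by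
    intro i hij
    exact Fin.pos_iff_ne_zero.mp (lt_of_le_of_lt (Fin.zero_le j) hij)
  have hgt : ∀ (i : Fin (k+1)) (hij : j < i), g i = e (i.pred (hne0 i hij)) := by
    intro i hij
    simp only [hg, Function.comp_apply, Fin.cycleRange_of_gt hij]
    conv_lhs => rw [← Fin.succ_pred i (hne0 i hij)]
    rw [Fin.cons_succ]
  have hmem : ∀ i, g i ∈ insert y s := by
    intro i
    rcases Fin.eq_zero_or_eq_succ (Fin.cycleRange j i) with h0 | ⟨i', hi'⟩
    · simp only [hg, Function.comp_apply, h0, Fin.cons_zero]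
      exact Finset.mem_insert_self y s
    · simp only [hg, Function.comp_apply, hi', Fin.cons_succ]
      exact Finset.mem_insert_of_mem (Finset.orderEmbOfFin_mem s h i')
  have hmono : StrictMono g := by
    intro i₁ i₂ h12
    rcases lt_trichotomy i₂ j with h2 | h2 | h2
    · rw [hlt i₁ (h12.trans h2), hlt i₂ h2]
      exact (s.orderEmbOfFin h).strictMono (by simpa [Fin.mk_lt_mk] using h12)
    · subst h2
      rw [hlt i₁ h12, heq, orderEmbOfFin_lt_iff s h y]
      have : (i₁:ℕ) < (i₂:ℕ) := h12
      simp only [Fin.val_mk]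
      omega
    · rcases lt_trichotomy i₁ j with h1 | h1 | h1
      · rw [hlt i₁ h1, hgt i₂ h2]
        apply (s.orderEmbOfFin h).strictMono
        have hv1 : (i₁:ℕ) < (j:ℕ) := h1
        have hv2 : (j:ℕ) < (i₂:ℕ) := h2
        simp only [Fin.lt_def, Fin.coe_pred]
        omega
      · rw [h1, heq, hgt i₂ h2]
        have hnlt : ¬ (e (i₂.pred (hne0 i₂ h2)) < y) := by
          rw [orderEmbOfFin_lt_iff s h y, ← hj]
          have : (j:ℕ) < (i₂:ℕ) := h2
          simp only [Fin.coe_pred]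
          omega
        have hne : y ≠ e (i₂.pred (hne0 i₂ h2)) := by
          intro hc
          exact hy (hc ▸ Finset.orderEmbOfFin_mem s h _)
        exact lt_of_le_of_ne (not_lt.mp hnlt) hne
      · rw [hgt i₁ h1, hgt i₂ h2]
        apply (s.orderEmbOfFin h).strictMono
        have hv1 : (j:ℕ) < (i₁:ℕ) := h1
        have hv2 : (i₁:ℕ) < (i₂:ℕ) := h12
        simp only [Fin.lt_def, Fin.coe_pred]
        omega
  exact (Finset.orderEmbOfFin_unique h' hmem hmono).symm

open Matrix Equiv in
lemma det_cons_perm {R : Type*} [CommRing R] {k N : ℕ}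
    (M : Matrix (Fin (k+1)) (Fin N) R) (x : Fin N) (g : Fin k → Fin N)
    (c : Equiv.Perm (Fin k)) :
    (M.submatrix id (Fin.cons x (g ∘ ⇑c))).det
      = Equiv.Perm.sign c * (M.submatrix id (Fin.cons x g)).det := by
  rw [Matrix.det_succ_column_zero, Matrix.det_succ_column_zero, Finset.mul_sum]
  refine Finset.sum_congr rfl fun i _ => ?_
  have h1 : ((M.submatrix id (Fin.cons x (g ∘ ⇑c))).submatrix i.succAbove Fin.succ)
      = ((M.submatrix id (Fin.cons x g)).submatrix i.succAbove Fin.succ).submatrix id ⇑c := by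
    ext i' j'
    simp [Matrix.submatrix_apply]
  rw [h1, Matrix.det_permute']
  simp only [Matrix.submatrix_apply, id_eq, Fin.cons_zero]
  ring

open Matrix in
lemma plucker_D {R : Type*} [CommRing R] {m N : ℕ} (M : Matrix (Fin (m+2)) (Fin N) R)
    (a b c d : Fin N) (e : Fin m → Fin N) :
    (M.submatrix id (Fin.cons a (Fin.cons b e))).det *
        (M.submatrix id (Fin.cons c (Fin.cons d e))).det
      - (M.submatrix id (Fin.cons a (Fin.cons c e))).det *
        (M.submatrix id (Fin.cons b (Fin.cons d e))).det
      + (M.submatrix id (Fin.cons a (Fin.cons d e))).det *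
        (M.submatrix id (Fin.cons b (Fin.cons c e))).det = 0 := by
  set f : (Fin (m+2) → R) →ₗ[R] R :=
    (LinearMap.proj (1 : Fin (m+2))).comp
      (Matrix.cramer (M.submatrix id (Fin.cons a (Fin.cons a e)))) with hfdef
  set t : Fin (m+2+1) → Fin N := Fin.cons b (Fin.cons c (Fin.cons d e)) with htdef
  set w : Fin (m+1+2) → Fin (m+1+1) → R := fun j i => M i (t j) with hwdef
  have hfval : ∀ z : Fin N,
      f (fun i => M i z) = (M.submatrix id (Fin.cons a (Fin.cons z e))).det := by
    intro z
    have hupd : (M.submatrix id (Fin.cons a (Fin.cons a e))).updateCol 1 (fun i => M i z)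
        = M.submatrix id (Fin.cons a (Fin.cons z e)) := by
      ext i j
      induction j using Fin.cases with
      | zero =>
        rw [Matrix.updateCol_apply, if_neg (by simp [Fin.ext_iff])]
        simp
      | succ j' =>
        induction j' using Fin.cases with
        | zero =>
          rw [Matrix.updateCol_apply,
            if_pos (show Fin.succ 0 = (1 : Fin (m+2)) from rfl)]
          simp
        | succ j'' =>
          rw [Matrix.updateCol_apply,
            if_neg (show ¬ (Fin.succ (Fin.succ j'') = (1 : Fin (m+2))) by
              simp [Fin.ext_iff])]
          simp
    simp only [hfdef, LinearMap.comp_apply, LinearMap.proj_apply, Matrix.cramer_apply, hupd]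
  have hfw : ∀ j : Fin (m+1+2),
      f (w j) = (M.submatrix id (Fin.cons a (Fin.cons (t j) e))).det := by
    intro j
    have : w j = fun i => M i (t j) := rfl
    rw [this, hfval]
  have hmat : ∀ (j : Fin (m+1+2)) (u : Fin (m+2) → Fin N),
      (∀ j', t (j.succAbove j') = u j') →
      (Matrix.of fun i j' => w (j.succAbove j') i) = M.submatrix id u := by
    intro j u hu
    ext i j'
    simp [hwdef, hu j']
  have key := plucker_syzygy f w
  rw [Fin.sum_univ_succ, Fin.sum_univ_succ, Fin.sum_univ_succ] at key
  have hs0 : ∀ j' : Fin (m+2), t ((0 : Fin (m+2+1)).succAbove j')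
      = (Fin.cons c (Fin.cons d e) : Fin (m+2) → Fin N) j' := by
    intro j'
    rw [Fin.succAbove_zero]
    simp [htdef]
  have hs1 : ∀ j' : Fin (m+2), t ((Fin.succ (0 : Fin (m+2))).succAbove j')
      = (Fin.cons b (Fin.cons d e) : Fin (m+2) → Fin N) j' := by
    intro j'
    induction j' using Fin.cases with
    | zero => rw [Fin.succ_succAbove_zero]; simp [htdef]
    | succ j'' =>
      rw [Fin.succ_succAbove_succ, Fin.succAbove_zero]
      simp [htdef]
  have hs2 : ∀ j' : Fin (m+2), t ((Fin.succ (Fin.succ (0 : Fin (m+1)))).succAbove j')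
      = (Fin.cons b (Fin.cons c e) : Fin (m+2) → Fin N) j' := by
    intro j'
    induction j' using Fin.cases with
    | zero => rw [Fin.succ_succAbove_zero]; simp [htdef]
    | succ j'' =>
      rw [Fin.succ_succAbove_succ]
      induction j'' using Fin.cases with
      | zero => rw [Fin.succ_succAbove_zero]; simp [htdef]
      | succ j''' =>
        rw [Fin.succ_succAbove_succ, Fin.succAbove_zero]
        simp [htdef]
  have hrest : ∀ j'' : Fin m, f (w (Fin.succ (Fin.succ (Fin.succ j'')))) = 0 := by
    intro j''
    rw [hfw]
    have ht3 : t (Fin.succ (Fin.succ (Fin.succ j''))) = e j'' := by simp [htdef]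
    rw [ht3]
    apply Matrix.det_zero_of_column_eq
      (show (1 : Fin (m+2)) ≠ Fin.succ (Fin.succ j'') by simp [Fin.ext_iff])
    intro i
    show (M.submatrix id (Fin.cons a (Fin.cons (e j'') e))) i (Fin.succ 0)
      = (M.submatrix id (Fin.cons a (Fin.cons (e j'') e))) i (Fin.succ (Fin.succ j''))
    simp
  rw [hmat 0 _ hs0, hmat (Fin.succ 0) _ hs1, hmat (Fin.succ (Fin.succ 0)) _ hs2] at key
  rw [hfw 0, hfw (Fin.succ 0), hfw (Fin.succ (Fin.succ 0))] at key
  have ht0 : t 0 = b := by rw [htdef, Fin.cons_zero]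
  have ht1 : t (Fin.succ 0) = c := by rw [htdef, Fin.cons_succ, Fin.cons_zero]
  have ht2 : t (Fin.succ (Fin.succ 0)) = d := by rw [htdef, Fin.cons_succ, Fin.cons_succ, Fin.cons_zero]
  rw [ht0, ht1, ht2] at key
  rw [Finset.sum_eq_zero (fun j'' _ => by rw [hrest j'']; ring)] at key
  simp only [Fin.val_succ, Fin.val_zero, pow_zero, pow_succ, pow_zero, one_mul, add_zero] at key
  linear_combination key

open Matrix Finset Equiv in
lemma maxMinor_insert_insert {R : Type*} [CommRing R] {m : ℕ}
    (M : Matrix (Fin (m+2)) (Fin (m+2+2)) R)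
    (I : Finset (Fin (m+2+2))) (hI : I.card = m)
    (x y : Fin (m+2+2)) (hx : x ∉ I) (hy : y ∉ I) (hxy : x < y) :
    maxMinor M (insert x (insert y I)) =
      (-1:R) ^ ((I.filter (· < x)).card + (I.filter (· < y)).card) *
        (M.submatrix id (Fin.cons x (Fin.cons y ⇑(I.orderEmbOfFin hI)))).det := by
  have hxy' : x ≠ y := ne_of_lt hxy
  have hxJ : x ∉ insert y I := by
    simp only [Finset.mem_insert]
    push_neg
    exact ⟨hxy', hx⟩
  have hJ' : (insert y I).card = m + 1 := by
    rw [Finset.card_insert_of_notMem hy, hI]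
  have hJ : (insert x (insert y I)).card = m + 2 := by
    rw [Finset.card_insert_of_notMem hxJ, hJ']
  set px := (I.filter (· < x)).card with hpx
  set py := (I.filter (· < y)).card with hpy
  have hpxm : px ≤ m := hI ▸ Finset.card_filter_le I _
  have hpym : py ≤ m := hI ▸ Finset.card_filter_le I _
  set jx : Fin (m+2) := ⟨px, by omega⟩ with hjxdef
  set jy : Fin (m+1) := ⟨py, by omega⟩ with hjydef
  have hjx : (jx:ℕ) = ((insert y I).filter (· < x)).card := by
    rw [Finset.filter_insert, if_neg (by exact not_lt.mpr (le_of_lt hxy))]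
  have h2 : ⇑((insert y I).orderEmbOfFin hJ') =
      Fin.cons y ⇑(I.orderEmbOfFin hI) ∘ ⇑(Fin.cycleRange jy) :=
    orderEmbOfFin_insert I hI y hy hJ' jy rfl
  have h1 : ⇑((insert x (insert y I)).orderEmbOfFin hJ) =
      Fin.cons x ⇑((insert y I).orderEmbOfFin hJ') ∘ ⇑(Fin.cycleRange jx) :=
    orderEmbOfFin_insert (insert y I) hJ' x hxJ hJ jx hjx
  have hsub : ∀ (t : Fin (m+2) → Fin (m+2+2)) (σ : Perm (Fin (m+2))),
      (M.submatrix id (t ∘ ⇑σ)).det = Perm.sign σ * (M.submatrix id t).det := by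
    intro t σ
    have he : M.submatrix id (t ∘ ⇑σ) = (M.submatrix id t).submatrix id ⇑σ := by
      ext i j'; simp
    rw [he, Matrix.det_permute']
  have hsx : ((Perm.sign (Fin.cycleRange jx) : ℤ) : R) = (-1:R)^px := by
    rw [Fin.sign_cycleRange]; push_cast; norm_num; rfl
  have hsy : ((Perm.sign (Fin.cycleRange jy) : ℤ) : R) = (-1:R)^py := by
    rw [Fin.sign_cycleRange]; push_cast; norm_num; rfl
  show (if h : (insert x (insert y I)).card = m + 2 then
      (M.submatrix id ((insert x (insert y I)).orderEmbOfFin h)).det else 0) = _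
  rw [dif_pos hJ]
  calc (M.submatrix id ⇑((insert x (insert y I)).orderEmbOfFin hJ)).det
      = (M.submatrix id (Fin.cons x ⇑((insert y I).orderEmbOfFin hJ')
          ∘ ⇑(Fin.cycleRange jx))).det := by rw [h1]
    _ = Perm.sign (Fin.cycleRange jx) *
        (M.submatrix id (Fin.cons x ⇑((insert y I).orderEmbOfFin hJ'))).det :=
      hsub _ _
    _ = Perm.sign (Fin.cycleRange jx) *
        (M.submatrix id (Fin.cons x (Fin.cons y ⇑(I.orderEmbOfFin hI)
          ∘ ⇑(Fin.cycleRange jy)))).det := by rw [h2]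
    _ = Perm.sign (Fin.cycleRange jx) * (Perm.sign (Fin.cycleRange jy) *
        (M.submatrix id (Fin.cons x (Fin.cons y ⇑(I.orderEmbOfFin hI)))).det) := by
      rw [det_cons_perm]
    _ = (-1:R) ^ (px + py) *
        (M.submatrix id (Fin.cons x (Fin.cons y ⇑(I.orderEmbOfFin hI)))).det := by
      rw [← mul_assoc, hsx, hsy, pow_add]

/-- The three-term Plücker relation among maximal minors of an `n × (n+2)` matrix:
for a set `I` of `n−2` column indices and remaining distinct indices `a < b < c < d`,
`[I∪{a,b}][I∪{c,d}] − [I∪{a,c}][I∪{b,d}] + [I∪{a,d}][I∪{b,c}] = 0`. -/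
theorem stmt4 {R : Type*} [CommRing R] (n : ℕ) (hn : 2 ≤ n)
    (M : Matrix (Fin n) (Fin (n + 2)) R)
    (I : Finset (Fin (n + 2))) (hI : I.card = n - 2)
    (a b c d : Fin (n + 2))
    (ha : a ∉ I) (hb : b ∉ I) (hc : c ∉ I) (hd : d ∉ I)
    (hab : a < b) (hbc : b < c) (hcd : c < d) :
    maxMinor M (insert a (insert b I)) * maxMinor M (insert c (insert d I))
      - maxMinor M (insert a (insert c I)) * maxMinor M (insert b (insert d I))
      + maxMinor M (insert a (insert d I)) * maxMinor M (insert b (insert c I)) = 0 := by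
  obtain ⟨m, rfl⟩ : ∃ m, n = m + 2 := ⟨n - 2, by omega⟩
  have hIm : I.card = m := by omega
  rw [maxMinor_insert_insert M I hIm a b ha hb hab,
      maxMinor_insert_insert M I hIm c d hc hd hcd,
      maxMinor_insert_insert M I hIm a c ha hc (hab.trans hbc),
      maxMinor_insert_insert M I hIm b d hb hd (hbc.trans hcd),
      maxMinor_insert_insert M I hIm a d ha hd ((hab.trans hbc).trans hcd),
      maxMinor_insert_insert M I hIm b c hb hc hbc]
  linear_combination ((-1:R)^((I.filter (· < a)).card) * (-1:R)^((I.filter (· < b)).card) *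
      (-1:R)^((I.filter (· < c)).card) * (-1:R)^((I.filter (· < d)).card)) *
    plucker_D M a b c d ⇑(I.orderEmbOfFin hIm)
end

section
/- Generalized Laplace expansion: for a 2n×2n matrix M over a commutative ring, det(M) = Σ_{Λ ⊂ [2n], |Λ| = n} ε(Λ) · det(M_{bottom, Λ}) · det(M_{top, Λ^c}), where M_{bottom,Λ} is the submatrix on rows n+1,…,2n and columns Λ, M_{top,Λ^c} is the submatrix on rows 1,…,n and the complementary columns, and ε(Λ) = (−1)^{Σ_{λ∈Λ} λ + n(3n+1)/2}. -/
open Equiv Equiv.Perm Finset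


/-- The `n × n` minor of a `2n × 2n` matrix `M` on the rows given by `rows` and the
columns of the set `Λ` taken in increasing order (junk value `0` if `Λ.card ≠ n`). -/
noncomputable def blockMinor {R : Type*} [CommRing R] {n : ℕ}
    (M : Matrix (Fin (2 * n)) (Fin (2 * n)) R)
    (rows : Fin n → Fin (2 * n)) (Λ : Finset (Fin (2 * n))) : R :=
  if h : Λ.card = n then (M.submatrix rows (Λ.orderEmbOfFin h)).det else 0


theorem mySign_eq_signAux {m : ℕ} (f : Equiv.Perm (Fin m)) :
    Equiv.Perm.sign f = Equiv.Perm.signAux f := by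
  refine Equiv.Perm.swap_induction_on f ?_ ?_
  · simp [Equiv.Perm.signAux_one]
  · intro f x y hxy ih
    rw [map_mul, Equiv.Perm.signAux_mul, ih, Equiv.Perm.sign_swap hxy,
      Equiv.Perm.signAux_swap hxy]

section
variable {n : ℕ} {Λ : Finset (Fin (2 * n))} (hΛ : Λ.card = n) (hc : Λᶜ.card = n)

theorem mem_iff_exists (b : Fin (2 * n)) (hb : b ∈ Λ) :
    ∃ i, Λ.orderEmbOfFin hΛ i = b := by
  have : b ∈ Set.range (Λ.orderEmbOfFin hΛ) := by
    rw [Finset.range_orderEmbOfFin]; exact hb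
  exact this

theorem compl_mem_iff_exists (b : Fin (2 * n)) (hb : b ∉ Λ) :
    ∃ i, Λᶜ.orderEmbOfFin hc i = b := by
  have : b ∈ Set.range (Λᶜ.orderEmbOfFin hc) := by
    rw [Finset.range_orderEmbOfFin]; simpa using hb
  exact this
end

def sumFin (n : ℕ) : Fin n ⊕ Fin n ≃ Fin (2 * n) :=
  (Equiv.sumComm _ _).trans (finSumFinEquiv.trans (finCongr (by omega)))

@[simp] theorem sumFin_inl (n : ℕ) (i : Fin n) :
    sumFin n (Sum.inl i) = ⟨n + i.val, by omega⟩ := by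
  simp [sumFin, Fin.ext_iff]; omega

@[simp] theorem sumFin_inr (n : ℕ) (i : Fin n) :
    sumFin n (Sum.inr i) = ⟨i.val, by omega⟩ := by
  simp [sumFin, Fin.ext_iff]

section
variable {n : ℕ} {Λ : Finset (Fin (2 * n))} (hΛ : Λ.card = n) (hc : Λᶜ.card = n)

/-- the shuffle permutation sending `Λ` monotonically to the bottom rows and `Λᶜ` to the top. -/
def shuffle : Equiv.Perm (Fin (2 * n)) :=
  (finSumEquivOfFinset hΛ hc).symm.trans (sumFin n)

theorem shuffle_apply_mem (i : Fin n) :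
    shuffle hΛ hc (Λ.orderEmbOfFin hΛ i) = ⟨n + i.val, by omega⟩ := by
  have h : (finSumEquivOfFinset hΛ hc).symm (Λ.orderEmbOfFin hΛ i) = Sum.inl i := by
    rw [Equiv.symm_apply_eq, finSumEquivOfFinset_inl]
  simp [shuffle, h]

theorem shuffle_apply_compl (i : Fin n) :
    shuffle hΛ hc (Λᶜ.orderEmbOfFin hc i) = ⟨i.val, by omega⟩ := by
  have h : (finSumEquivOfFinset hΛ hc).symm (Λᶜ.orderEmbOfFin hc i) = Sum.inr i := by
    rw [Equiv.symm_apply_eq, finSumEquivOfFinset_inr]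
  simp [shuffle, h]

theorem shuffle_cond (x : Σ _ : Fin (2 * n), Fin (2 * n)) (hx : x.2 < x.1) :
    (shuffle hΛ hc x.1 ≤ shuffle hΛ hc x.2 ↔ (x.2 ∈ Λ ∧ x.1 ∉ Λ)) := by
  by_cases h1 : x.1 ∈ Λ
  · obtain ⟨i, hi⟩ := mem_iff_exists hΛ x.1 h1
    by_cases h2 : x.2 ∈ Λ
    · obtain ⟨j, hj⟩ := mem_iff_exists hΛ x.2 h2
      have hij : j < i := by
        have := (Λ.orderEmbOfFin hΛ).strictMono.lt_iff_lt (a := j) (b := i)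
        rw [hi, hj] at this; exact this.mp hx
      rw [← hi] at h1
      rw [← hj] at h2
      rw [← hi, ← hj, shuffle_apply_mem, shuffle_apply_mem]
      simp only [Fin.mk_le_mk]
      constructor
      · intro h; omega
      · rintro ⟨-, h⟩; exact absurd h1 h
    · obtain ⟨j, hj⟩ := compl_mem_iff_exists hc x.2 h2
      rw [← hi] at h1
      rw [← hj] at h2
      rw [← hi, ← hj, shuffle_apply_mem, shuffle_apply_compl]
      simp only [Fin.mk_le_mk]
      constructor
      · intro h; have := j.2; omega
      · rintro ⟨h, -⟩; exact absurd h h2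
  · obtain ⟨i, hi⟩ := compl_mem_iff_exists hc x.1 h1
    by_cases h2 : x.2 ∈ Λ
    · obtain ⟨j, hj⟩ := mem_iff_exists hΛ x.2 h2
      rw [← hi] at h1
      rw [← hj] at h2
      rw [← hi, ← hj, shuffle_apply_compl, shuffle_apply_mem]
      simp only [Fin.mk_le_mk]
      have := i.2
      constructor
      · intro; exact ⟨h2, h1⟩
      · intro; omega
    · obtain ⟨j, hj⟩ := compl_mem_iff_exists hc x.2 h2
      have hij : j < i := by
        have := (Λᶜ.orderEmbOfFin hc).strictMono.lt_iff_lt (a := j) (b := i)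
        rw [hi, hj] at this; exact this.mp hx
      rw [← hi] at h1
      rw [← hj] at h2
      rw [← hi, ← hj, shuffle_apply_compl, shuffle_apply_compl]
      simp only [Fin.mk_le_mk]
      constructor
      · intro h; omega
      · rintro ⟨h, -⟩; exact absurd h h2
end

section
variable {n : ℕ} {Λ : Finset (Fin (2 * n))} (hΛ : Λ.card = n) (hc : Λᶜ.card = n)

theorem image_orderEmbOfFin : Finset.image (Λ.orderEmbOfFin hΛ) Finset.univ = Λ := by
  ext b
  simp only [Finset.mem_image, Finset.mem_univ, true_and]
  constructor
  · rintro ⟨i, rfl⟩; exact Λ.orderEmbOfFin_mem hΛ i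
  · intro hb; exact mem_iff_exists hΛ b hb

include hΛ in
theorem count_inv :
    ((finPairsLT (2 * n)).filter fun x => x.2 ∈ Λ ∧ x.1 ∉ Λ).card + ∑ l ∈ Λ, l.val
      = ∑ i : Fin n, (n + i.val) := by
  classical
  set f := Λ.orderEmbOfFin hΛ with hf
  have hinj : Function.Injective f := (Λ.orderEmbOfFin hΛ).injective
  -- sum over Λ as sum over Fin n
  have hreindex : ∀ F : Fin (2 * n) → ℕ, ∑ b ∈ Λ, F b = ∑ i : Fin n, F (f i) := by
    intro F
    refine (Finset.sum_bij (fun i _ => f i) (fun i _ => Λ.orderEmbOfFin_mem hΛ i)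
      (fun a _ b _ h => hinj h) (fun b hb => ?_) (fun i _ => rfl)).symm
    obtain ⟨i, hi⟩ := mem_iff_exists hΛ b hb
    exact ⟨i, Finset.mem_univ i, hi⟩
  have hT : ∑ l ∈ Λ, l.val = ∑ i : Fin n, (f i).val := hreindex _
  -- fiberwise count
  have hfib : ((finPairsLT (2 * n)).filter fun x => x.2 ∈ Λ ∧ x.1 ∉ Λ).card
      = ∑ b ∈ Λ, (((finPairsLT (2 * n)).filter fun x => x.2 ∈ Λ ∧ x.1 ∉ Λ).filter
          fun x => x.2 = b).card := by
    refine Finset.card_eq_sum_card_fiberwise ?_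
    intro x hx
    exact (Finset.mem_filter.1 hx).2.1
  have hfib2 : ∀ i : Fin n, (((finPairsLT (2 * n)).filter fun x => x.2 ∈ Λ ∧ x.1 ∉ Λ).filter
      fun x => x.2 = f i).card = ((Finset.Ioi (f i)).filter (· ∉ Λ)).card := by
    intro i
    refine Finset.card_bij (fun x _ => x.1) ?_ ?_ ?_
    · intro x hx
      simp only [Finset.mem_filter, Equiv.Perm.mem_finPairsLT] at hx
      simp only [Finset.mem_filter, Finset.mem_Ioi]
      exact ⟨hx.2 ▸ hx.1.1, hx.1.2.2⟩
    · intro x hx y hy h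
      simp only [Finset.mem_filter] at hx hy
      exact Sigma.ext h (by rw [hx.2, hy.2])
    · intro a ha
      simp only [Finset.mem_filter, Finset.mem_Ioi] at ha
      exact ⟨⟨a, f i⟩, Finset.mem_filter.2 ⟨Finset.mem_filter.2
        ⟨Equiv.Perm.mem_finPairsLT.2 ha.1, Λ.orderEmbOfFin_mem hΛ i, ha.2⟩, rfl⟩, rfl⟩
  have hcntI : ∀ i : Fin n, ((Finset.Ioi (f i)).filter (· ∈ Λ)).card = n - 1 - i.val := by
    intro i
    have : (Finset.Ioi i).card = ((Finset.Ioi (f i)).filter (· ∈ Λ)).card := by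
      refine Finset.card_bij (fun j _ => f j) ?_ ?_ ?_
      · intro j hj
        simp only [Finset.mem_Ioi] at hj
        simp only [Finset.mem_filter, Finset.mem_Ioi]
        exact ⟨(Λ.orderEmbOfFin hΛ).strictMono hj, Λ.orderEmbOfFin_mem hΛ j⟩
      · intro a _ b _ h; exact hinj h
      · intro a ha
        simp only [Finset.mem_filter, Finset.mem_Ioi] at ha
        obtain ⟨j, rfl⟩ := mem_iff_exists hΛ a ha.2
        exact ⟨j, Finset.mem_Ioi.2 (((Λ.orderEmbOfFin hΛ).strictMono.lt_iff_lt).1 ha.1), rfl⟩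
    rw [← this, Fin.card_Ioi]
  have hsplit : ∀ i : Fin n,
      (((Finset.Ioi (f i)).filter (· ∈ Λ)).card + ((Finset.Ioi (f i)).filter (· ∉ Λ)).card)
        = 2 * n - 1 - (f i).val := by
    intro i
    rw [Finset.card_filter_add_card_filter_not, Fin.card_Ioi]
  have hkey : ∀ i : Fin n, ((Finset.Ioi (f i)).filter (· ∉ Λ)).card + (f i).val = n + i.val := by
    intro i
    have h1 := hsplit i
    rw [hcntI i] at h1
    have h2 : (f i).val < 2 * n := (f i).2
    have h3 : i.val < n := i.2
    omega
  rw [hfib, hreindex, hT, ← Finset.sum_add_distrib]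
  exact Finset.sum_congr rfl fun i _ => by rw [hfib2 i]; exact hkey i
end

section
variable {n : ℕ} {Λ : Finset (Fin (2 * n))} (hΛ : Λ.card = n) (hc : Λᶜ.card = n)

theorem sign_shuffle :
    Equiv.Perm.sign (shuffle hΛ hc)
      = (-1 : ℤˣ) ^ ((∑ l ∈ Λ, (l.val + 1)) + n * (3 * n + 1) / 2) := by
  classical
  have h1 : Equiv.Perm.signAux (shuffle hΛ hc)
      = ∏ x ∈ finPairsLT (2 * n), if (x.2 ∈ Λ ∧ x.1 ∉ Λ) then (-1 : ℤˣ) else 1 :=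
    Finset.prod_congr rfl fun x hx =>
      if_congr (shuffle_cond hΛ hc x (Equiv.Perm.mem_finPairsLT.1 hx)) rfl rfl
  rw [mySign_eq_signAux, h1, Finset.prod_ite, Finset.prod_const, Finset.prod_const,
    one_pow, mul_one]
  set A := ((finPairsLT (2 * n)).filter fun x => x.2 ∈ Λ ∧ x.1 ∉ Λ).card with hA
  set E := (∑ l ∈ Λ, (l.val + 1)) + n * (3 * n + 1) / 2 with hE
  have hcount := count_inv hΛ
  -- arithmetic facts
  have hT1 : ∑ l ∈ Λ, (l.val + 1) = (∑ l ∈ Λ, l.val) + n := by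
    rw [Finset.sum_add_distrib, Finset.sum_const, hΛ, smul_eq_mul, mul_one]
  have hS : ∑ i : Fin n, (n + i.val) = n * n + ∑ i : Fin n, i.val := by
    rw [Finset.sum_add_distrib, Finset.sum_const, Finset.card_univ, Fintype.card_fin,
      smul_eq_mul]
  have hq : (∑ i : Fin n, i.val) * 2 = n * (n - 1) := by
    have h4 : ∑ i : Fin n, i.val = ∑ i ∈ Finset.range n, i :=
      Fin.sum_univ_eq_sum_range (fun i => i) n
    rw [h4]
    exact Finset.sum_range_id_mul_two n
  have hq2 : n * (n - 1) + n = n * n := by cases n <;> simp [Nat.succ_sub_one] <;> ring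
  have heu : Even (n * (3 * n + 1)) := by
    have h3 : n * (3 * n + 1) = n * (n + 1) + 2 * (n * n) := by ring
    rw [h3]
    exact (Nat.even_mul_succ_self n).add ⟨n * n, by ring⟩
  have hH : n * (3 * n + 1) / 2 * 2 = n * (3 * n + 1) :=
    Nat.div_mul_cancel heu.two_dvd
  have hu : n * (3 * n + 1) = 3 * (n * n) + n := by ring
  have heven : Even (A + E) := by
    rw [Nat.even_iff]
    rw [hS] at hcount
    omega
  have key : ∀ a b : ℕ, Even (a + b) → (-1 : ℤˣ) ^ a = (-1 : ℤˣ) ^ b := by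
    intro a b hab
    have h2 : ((-1 : ℤˣ) ^ b) * ((-1 : ℤˣ) ^ b) = 1 := Int.units_mul_self _
    calc (-1 : ℤˣ) ^ a = (-1 : ℤˣ) ^ a * (((-1 : ℤˣ) ^ b) * ((-1 : ℤˣ) ^ b)) := by
          rw [h2, mul_one]
      _ = ((-1 : ℤˣ) ^ (a + b)) * (-1 : ℤˣ) ^ b := by rw [pow_add, mul_assoc]
      _ = (-1 : ℤˣ) ^ b := by rw [hab.neg_one_pow, one_mul]
  exact key A E heven
end

theorem compl_card {n : ℕ} {Λ : Finset (Fin (2 * n))} (h : Λ.card = n) : Λᶜ.card = n := by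
  rw [Finset.card_compl, Fintype.card_fin, h]; omega

section
variable {n : ℕ} {Λ : Finset (Fin (2 * n))} (hΛ : Λ.card = n) (hc : Λᶜ.card = n)
variable (σ τ : Equiv.Perm (Fin n))

theorem trans_apply_mem (i : Fin n) :
    (((finSumEquivOfFinset hΛ hc).symm.trans (Equiv.sumCongr σ τ)).trans (sumFin n))
        (Λ.orderEmbOfFin hΛ i) = ⟨n + (σ i).val, by omega⟩ := by
  have h : (finSumEquivOfFinset hΛ hc).symm (Λ.orderEmbOfFin hΛ i) = Sum.inl i := by
    rw [Equiv.symm_apply_eq, finSumEquivOfFinset_inl]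
  simp [h]

theorem trans_apply_compl (i : Fin n) :
    (((finSumEquivOfFinset hΛ hc).symm.trans (Equiv.sumCongr σ τ)).trans (sumFin n))
        (Λᶜ.orderEmbOfFin hc i) = ⟨(τ i).val, by omega⟩ := by
  have h : (finSumEquivOfFinset hΛ hc).symm (Λᶜ.orderEmbOfFin hc i) = Sum.inr i := by
    rw [Equiv.symm_apply_eq, finSumEquivOfFinset_inr]
  simp [h]
end

/-- the combination map -/
def Phi (n : ℕ)
    (x : Σ _Λ : {Λ : Finset (Fin (2 * n)) // Λ.card = n},
      Equiv.Perm (Fin n) × Equiv.Perm (Fin n)) : Equiv.Perm (Fin (2 * n)) :=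
  ((finSumEquivOfFinset x.1.2 (compl_card x.1.2)).symm.trans
    (Equiv.sumCongr x.2.1 x.2.2)).trans (sumFin n)

theorem Phi_inj (n : ℕ) : Function.Injective (Phi n) := by
  rintro ⟨⟨Λ₁, h₁⟩, σ₁, τ₁⟩ ⟨⟨Λ₂, h₂⟩, σ₂, τ₂⟩ h
  have hmem : ∀ (Λ : Finset (Fin (2 * n))) (hΛ : Λ.card = n)
      (σ τ : Equiv.Perm (Fin n)) (j : Fin (2 * n)),
      j ∈ Λ ↔ n ≤ (((((finSumEquivOfFinset hΛ (compl_card hΛ)).symm.trans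
        (Equiv.sumCongr σ τ)).trans (sumFin n))) j).val := by
    intro Λ hΛ σ τ j
    constructor
    · intro hj
      obtain ⟨i, rfl⟩ := mem_iff_exists hΛ j hj
      rw [trans_apply_mem]
      simp
    · intro hj
      by_contra hne
      obtain ⟨i, rfl⟩ := compl_mem_iff_exists (compl_card hΛ) j hne
      rw [trans_apply_compl] at hj
      have := (τ i).2
      simp at hj
      omega
  have hΛeq : Λ₁ = Λ₂ := by
    ext j
    rw [hmem Λ₁ h₁ σ₁ τ₁ j, hmem Λ₂ h₂ σ₂ τ₂ j]
    exact iff_of_eq (congrArg (fun π => n ≤ (π j : Fin (2 * n)).val) h)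
  subst hΛeq
  have hpf : h₂ = h₁ := rfl
  subst hpf
  rename' h₂ => h₁
  have hσ : σ₁ = σ₂ := by
    ext i
    have h1 := trans_apply_mem h₁ (compl_card h₁) σ₁ τ₁ i
    have h2 := trans_apply_mem h₁ (compl_card h₁) σ₂ τ₂ i
    have h3 := DFunLike.congr_fun h (Λ₁.orderEmbOfFin h₁ i)
    simp only [Phi] at h3
    rw [h1, h2] at h3
    simp only [Fin.mk.injEq] at h3
    omega
  have hτ : τ₁ = τ₂ := by
    ext i
    have h1 := trans_apply_compl h₁ (compl_card h₁) σ₁ τ₁ i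
    have h2 := trans_apply_compl h₁ (compl_card h₁) σ₂ τ₂ i
    have h3 := DFunLike.congr_fun h (Λ₁ᶜ.orderEmbOfFin (compl_card h₁) i)
    simp only [Phi] at h3
    rw [h1, h2] at h3
    simp only [Fin.mk.injEq] at h3
    exact congrArg Fin.val (Fin.ext h3)
  simp [hσ, hτ]

theorem Phi_bij (n : ℕ) : Function.Bijective (Phi n) := by
  rw [Fintype.bijective_iff_injective_and_card]
  refine ⟨Phi_inj n, ?_⟩
  rw [Fintype.card_sigma, Fintype.card_perm, Fintype.card_prod, Fintype.card_perm,
    Fintype.card_fin, Fintype.card_fin]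
  rw [Finset.sum_const, smul_eq_mul, Finset.card_univ, Fintype.card_subtype]
  have h1 : Finset.univ.filter (fun Λ : Finset (Fin (2 * n)) => Λ.card = n)
      = (Finset.univ : Finset (Fin (2 * n))).powersetCard n := by
    ext Λ; simp [Finset.mem_powersetCard_univ]
  rw [h1, Finset.card_powersetCard, Finset.card_univ, Fintype.card_fin]
  have h2 := Nat.choose_mul_factorial_mul_factorial (show n ≤ 2 * n by omega)
  have h3 : 2 * n - n = n := by omega
  rw [h3] at h2
  rw [← h2]; ring

theorem term_eq {R : Type*} [CommRing R] {n : ℕ} (M : Matrix (Fin (2 * n)) (Fin (2 * n)) R)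
    {Λ : Finset (Fin (2 * n))} (hΛ : Λ.card = n) (σ τ : Equiv.Perm (Fin n)) :
    ((Equiv.Perm.sign (Phi n ⟨⟨Λ, hΛ⟩, (σ, τ)⟩) : ℤ) : R)
        * ∏ j, M ((Phi n ⟨⟨Λ, hΛ⟩, (σ, τ)⟩) j) j
      = (-1 : R) ^ ((∑ l ∈ Λ, (l.val + 1)) + n * (3 * n + 1) / 2)
        * (((Equiv.Perm.sign σ : ℤ) : R)
            * ∏ i, M ⟨n + (σ i).val, by have := (σ i).2; omega⟩ (Λ.orderEmbOfFin hΛ i))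
        * (((Equiv.Perm.sign τ : ℤ) : R)
            * ∏ i, M ⟨(τ i).val, by have := (τ i).2; omega⟩
                (Λᶜ.orderEmbOfFin (compl_card hΛ) i)) := by
  classical
  set hc := compl_card hΛ with hhc
  set e := finSumEquivOfFinset hΛ hc with he
  have hdecomp : Phi n ⟨⟨Λ, hΛ⟩, (σ, τ)⟩
      = (shuffle hΛ hc) * ((e.symm.trans (Equiv.sumCongr σ τ)).trans e) := by
    ext j
    simp [Phi, shuffle, Equiv.Perm.mul_apply, Equiv.trans_apply, Equiv.symm_apply_apply, he]
  have hsign : Equiv.Perm.sign (Phi n ⟨⟨Λ, hΛ⟩, (σ, τ)⟩)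
      = (-1 : ℤˣ) ^ ((∑ l ∈ Λ, (l.val + 1)) + n * (3 * n + 1) / 2)
        * (Equiv.Perm.sign σ * Equiv.Perm.sign τ) := by
    rw [hdecomp, map_mul, sign_shuffle hΛ hc, Equiv.Perm.sign_symm_trans_trans,
      Equiv.Perm.sign_sumCongr]
  have hprod : ∏ j, M ((Phi n ⟨⟨Λ, hΛ⟩, (σ, τ)⟩) j) j
      = (∏ i, M ⟨n + (σ i).val, by have := (σ i).2; omega⟩ (Λ.orderEmbOfFin hΛ i))
        * ∏ i, M ⟨(τ i).val, by have := (τ i).2; omega⟩ (Λᶜ.orderEmbOfFin hc i) := by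
    rw [← Equiv.prod_comp e (fun j => M ((Phi n ⟨⟨Λ, hΛ⟩, (σ, τ)⟩) j) j)]
    rw [Fintype.prod_sum_type]
    congr 1
    · refine Finset.prod_congr rfl fun i _ => ?_
      rw [he, finSumEquivOfFinset_inl]
      rw [show (Phi n ⟨⟨Λ, hΛ⟩, (σ, τ)⟩) (Λ.orderEmbOfFin hΛ i)
        = ⟨n + (σ i).val, by have := (σ i).2; omega⟩ from trans_apply_mem hΛ hc σ τ i]
    · refine Finset.prod_congr rfl fun i _ => ?_
      rw [he, finSumEquivOfFinset_inr]
      rw [show (Phi n ⟨⟨Λ, hΛ⟩, (σ, τ)⟩) (Λᶜ.orderEmbOfFin hc i)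
        = ⟨(τ i).val, by have := (τ i).2; omega⟩ from trans_apply_compl hΛ hc σ τ i]
  rw [hprod, hsign]
  push_cast
  ring

/-- Generalized Laplace expansion: for a `2n × 2n` matrix `M` over a commutative ring,
`det M = Σ_{Λ ⊆ [2n], |Λ| = n} (−1)^{Σ_{λ∈Λ} λ + n(3n+1)/2} · det(M_{bottom,Λ}) · det(M_{top,Λᶜ})`,
where the bottom block consists of rows `n+1,…,2n`, the top block of rows `1,…,n`
(1-based), and the elements `λ ∈ Λ` are counted 1-based (here `λ.val + 1`). -/
theorem stmt14 {R : Type*} [CommRing R] (n : ℕ)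
    (M : Matrix (Fin (2 * n)) (Fin (2 * n)) R) :
    M.det = ∑ Λ ∈ (Finset.univ : Finset (Fin (2 * n))).powersetCard n,
      (-1 : R) ^ ((∑ l ∈ Λ, (l.val + 1)) + n * (3 * n + 1) / 2)
        * blockMinor M (fun i => ⟨n + i.val, by have := i.2; omega⟩) Λ
        * blockMinor M (fun i => ⟨i.val, by have := i.2; omega⟩) Λᶜ := by
  classical
  rw [Matrix.det_apply']
  rw [← (Phi_bij n).sum_comp (fun π => ((Equiv.Perm.sign π : ℤ) : R) * ∏ j, M (π j) j)]
  rw [← Finset.univ_sigma_univ, Finset.sum_sigma]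
  rw [Finset.sum_subtype ((Finset.univ : Finset (Fin (2 * n))).powersetCard n)
    (fun Λ => Finset.mem_powersetCard_univ)
    (fun Λ => (-1 : R) ^ ((∑ l ∈ Λ, (l.val + 1)) + n * (3 * n + 1) / 2)
        * blockMinor M (fun i => ⟨n + i.val, by have := i.2; omega⟩) Λ
        * blockMinor M (fun i => ⟨i.val, by have := i.2; omega⟩) Λᶜ)]
  refine Finset.sum_congr rfl fun Λs _ => ?_
  obtain ⟨Λ, hΛ⟩ := Λs
  rw [Fintype.sum_prod_type]
  simp only [blockMinor]
  rw [dif_pos hΛ, dif_pos (compl_card hΛ), Matrix.det_apply', Matrix.det_apply']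
  simp only [Matrix.submatrix_apply]
  simp only [Finset.mul_sum, Finset.sum_mul]
  rw [Finset.sum_comm]
  refine Finset.sum_congr rfl fun σ _ => Finset.sum_congr rfl fun τ _ => ?_
  exact term_eq M hΛ τ σ
end

section
/- In the case n = 3, the cubic polynomial f_LAP = T_{123}T_{345}^2 − T_{124}T_{245}T_{345} + T_{125}T_{145}T_{345} + 2T_{125}T_{235}T_{345} − T_{125}T_{245}^2 + T_{134}T_{145}T_{345} − T_{135}^2T_{345} − T_{135}T_{234}T_{345} + T_{135}T_{235}T_{245} − T_{145}T_{234}T_{245} − T_{234}^2T_{345} + 2T_{234}T_{235}T_{245} − T_{235}^3 vanishes when each variable T_{ijk} is substituted by the 3×3 minor on columns i,j,k of the 3×5 matrix with entries M_{p,q} = x_{p+q−1} if p+q−1 ≤ 5 and 0 otherwise. -/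
open MvPolynomial

noncomputable def hankelM3 (K : Type*) [Field K] :
    Matrix (Fin 3) (Fin 5) (MvPolynomial (Fin 6) K) :=
  fun i j => if h : i.val + j.val < 6 then X (⟨i.val + j.val, h⟩ : Fin 6) else 0

noncomputable def tMinor3 (K : Type*) [Field K] (a b c : Fin 5) :
    MvPolynomial (Fin 6) K :=
  ((hankelM3 K).submatrix id ![a, b, c]).det

lemma hankelM3_eq (K : Type*) [Field K] :
    hankelM3 K = Matrix.of ![![X 0, X 1, X 2, X 3, X 4],
      ![X 1, X 2, X 3, X 4, X 5], ![X 2, X 3, X 4, X 5, 0]] := by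
  funext i j
  fin_cases i <;> fin_cases j <;> rfl

lemma tMinor3_eq (K : Type*) [Field K] (a b c : Fin 5) :
    tMinor3 K a b c =
      hankelM3 K 0 a * hankelM3 K 1 b * hankelM3 K 2 c
      - hankelM3 K 0 a * hankelM3 K 1 c * hankelM3 K 2 b
      - hankelM3 K 0 b * hankelM3 K 1 a * hankelM3 K 2 c
      + hankelM3 K 0 b * hankelM3 K 1 c * hankelM3 K 2 a
      + hankelM3 K 0 c * hankelM3 K 1 a * hankelM3 K 2 b
      - hankelM3 K 0 c * hankelM3 K 1 b * hankelM3 K 2 a := by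
  simp [tMinor3, Matrix.det_fin_three]

set_option maxHeartbeats 1000000 in
/-- For `n = 3`, the cubic polynomial `f_LAP` vanishes when each variable `T_{ijk}`
is substituted by the `3 × 3` minor on columns `i,j,k` of the degenerate Hankel
matrix `H[1]` (columns are `1`-based in the paper; here `0`-based). -/
theorem stmt15 (K : Type*) [Field K] :
    tMinor3 K 0 1 2 * tMinor3 K 2 3 4 ^ 2
      - tMinor3 K 0 1 3 * tMinor3 K 1 3 4 * tMinor3 K 2 3 4
      + tMinor3 K 0 1 4 * tMinor3 K 0 3 4 * tMinor3 K 2 3 4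
      + 2 * tMinor3 K 0 1 4 * tMinor3 K 1 2 4 * tMinor3 K 2 3 4
      - tMinor3 K 0 1 4 * tMinor3 K 1 3 4 ^ 2
      + tMinor3 K 0 2 3 * tMinor3 K 0 3 4 * tMinor3 K 2 3 4
      - tMinor3 K 0 2 4 ^ 2 * tMinor3 K 2 3 4
      - tMinor3 K 0 2 4 * tMinor3 K 1 2 3 * tMinor3 K 2 3 4
      + tMinor3 K 0 2 4 * tMinor3 K 1 2 4 * tMinor3 K 1 3 4
      - tMinor3 K 0 3 4 * tMinor3 K 1 2 3 * tMinor3 K 1 3 4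
      - tMinor3 K 1 2 3 ^ 2 * tMinor3 K 2 3 4
      + 2 * tMinor3 K 1 2 3 * tMinor3 K 1 2 4 * tMinor3 K 1 3 4
      - tMinor3 K 1 2 4 ^ 3 = 0 := by
  simp only [tMinor3_eq, hankelM3_eq, Matrix.of_apply, Matrix.cons_val', Matrix.cons_val_zero,
    Matrix.cons_val_one, Matrix.head_cons, Matrix.cons_val_two, Matrix.tail_cons,
    Matrix.cons_val_three, Matrix.cons_val_four, Matrix.empty_val', Matrix.cons_val_fin_one,
    Matrix.head_fin_const]
  ring
end

section
/- The n²×n² staircase block matrix L[1] built from the columns C_1,…,C_{n+2} of the degenerate Hankel matrix H[1] (first block (C_1,…,C_{n+2},0,…), overlapping shifted blocks (C_1,…,C_{n+1}) over (C_2,…,C_{n+2}) thereafter) has determinant zero; indeed the row R_{n²−n+1} equals the alternating sum Σ_{j=2}^{n} (−1)^{j} R_{n²−jn+j}, i.e. Σ_{j=1}^{n}(−1)^{j+1} R_{n²−jn+j} = 0 as a row vector. -/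
open MvPolynomial

/-- The degenerate Hankel matrix `H[1]`: the `n × (n+2)` matrix over
`K[x_1,…,x_{2n}]` with `(i,j)` entry (1-based) `x_{i+j−1}` if `i+j−1 ≤ 2n` and `0`
otherwise; in 0-based indexing the entry is `X (i+j)` when `i+j < 2n`. -/
noncomputable def hankelH1 (K : Type*) [Field K] (n : ℕ) :
    Matrix (Fin n) (Fin (n + 2)) (MvPolynomial (Fin (2 * n)) K) :=
  fun i j => if h : i.val + j.val < 2 * n then X (⟨i.val + j.val, h⟩ : Fin (2 * n)) else 0

/-- The `n² × n²` staircase block matrix `L[1]` (Equation (4.1)): rows come in `n`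
blocks of `n` rows; the columns come in `n−1` vertical blocks, the first of width
`n+2` carrying `(C_1,…,C_{n+2})` over `(C_2,…,C_{n+2},0)` in row blocks `1, 2`,
and each subsequent block of width `n+1` carrying `(C_1,…,C_{n+1})` over
`(C_2,…,C_{n+2})` in row blocks `v, v+1`; all other entries are zero.  Here `C_i`
denotes the `i`-th column of `hankelH1`. -/
noncomputable def LOne (K : Type*) [Field K] (n : ℕ) (hn : 2 ≤ n) :
    Matrix (Fin (n * n)) (Fin (n * n)) (MvPolynomial (Fin (2 * n)) K) :=
  fun r c =>
    let rb := r.val / n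
    let ri : Fin n := ⟨r.val % n, Nat.mod_lt _ (by omega)⟩
    if hc : c.val < n + 2 then
      if rb = 0 then hankelH1 K n ri ⟨c.val, hc⟩
      else if rb = 1 then
        (if hcb : c.val ≤ n then hankelH1 K n ri ⟨c.val + 1, by omega⟩ else 0)
      else 0
    else
      let b := (c.val - (n + 2)) / (n + 1) + 1
      let cb : ℕ := (c.val - (n + 2)) % (n + 1)
      have hcb : cb < n + 1 := Nat.mod_lt _ (by omega)
      if rb = b then hankelH1 K n ri ⟨cb, by omega⟩
      else if rb = b + 1 then hankelH1 K n ri ⟨cb + 1, by omega⟩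
      else 0

/-- The row of `L[1]` with 1-based index `n² − jn + j` for `j = j'+1`, `j' : Fin n`;
its 0-based index is `(n − 1 − j')·n + j'`. -/
def rowIdx (n : ℕ) (j : Fin n) : Fin (n * n) :=
  ⟨(n - 1 - j.val) * n + j.val, by
    have hj := j.isLt
    have h1 : (n - 1 - j.val) * n ≤ (n - 1) * n :=
      Nat.mul_le_mul_right _ (by omega)
    have h2 : (n - 1) * n + n = n * n := by
      obtain ⟨m, rfl⟩ : ∃ m, n = m + 1 := ⟨n - 1, by omega⟩
      have hm : m + 1 - 1 = m := rfl
      rw [hm]; ring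
    omega⟩

lemma rowIdx_val (n : ℕ) (j : Fin n) :
    (rowIdx n j).val = (n - 1 - j.val) * n + j.val := rfl

lemma rowIdx_div (n : ℕ) (hn : 0 < n) (j : Fin n) :
    (rowIdx n j).val / n = n - 1 - j.val := by
  rw [rowIdx_val, mul_comm, Nat.mul_add_div hn, Nat.div_eq_of_lt j.isLt, add_zero]

lemma rowIdx_mod (n : ℕ) (j : Fin n) :
    (rowIdx n j).val % n = j.val := by
  rw [rowIdx_val, mul_comm, Nat.mul_add_mod, Nat.mod_eq_of_lt j.isLt]

lemma LOne_rowIdx (K : Type*) [Field K] (n : ℕ) (hn : 2 ≤ n) (j : Fin n) (c : Fin (n * n)) :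
    LOne K n hn (rowIdx n j) c =
    if hc : c.val < n + 2 then
      if n - 1 - j.val = 0 then hankelH1 K n j ⟨c.val, hc⟩
      else if n - 1 - j.val = 1 then
        (if h : c.val ≤ n then hankelH1 K n j ⟨c.val + 1, by omega⟩ else 0)
      else 0
    else
      if n - 1 - j.val = (c.val - (n + 2)) / (n + 1) + 1 then
        hankelH1 K n j ⟨(c.val - (n + 2)) % (n + 1), by
          have := Nat.mod_lt (c.val - (n + 2)) (show 0 < n + 1 by omega); omega⟩
      else if n - 1 - j.val = (c.val - (n + 2)) / (n + 1) + 1 + 1 then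
        hankelH1 K n j ⟨(c.val - (n + 2)) % (n + 1) + 1, by
          have := Nat.mod_lt (c.val - (n + 2)) (show 0 < n + 1 by omega); omega⟩
      else 0 := by
  have hd := rowIdx_div n (by omega) j
  have hm := rowIdx_mod n j
  simp only [LOne, hd, hm, Fin.eta]

lemma neg_pow_succ_cancel {R : Type*} [CommRing R] (a : ℕ) (x : R) :
    (-1 : R) ^ (a + 1) * x + (-1 : R) ^ a * x = 0 := by
  rw [pow_succ]; ring

lemma entry_eq (K : Type*) [Field K] (n : ℕ) (hn : 2 ≤ n) (c : Fin (n * n)) (b : ℕ)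
    (hbdef : b = if c.val < n + 2 then 0 else (c.val - (n + 2)) / (n + 1) + 1)
    (hb : b ≤ n - 2) (h0 : n - 1 - b < n) (h1 : n - 2 - b < n) :
    LOne K n hn (rowIdx n ⟨n - 1 - b, h0⟩) c = LOne K n hn (rowIdx n ⟨n - 2 - b, h1⟩) c := by
  have hcn := c.isLt
  simp only [LOne_rowIdx]
  by_cases hc : c.val < n + 2
  · rw [if_pos hc] at hbdef
    rw [dif_pos hc, dif_pos hc]
    rw [if_pos (by omega)]
    rw [if_neg (by omega), if_pos (by omega)]
    by_cases hcle : c.val ≤ n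
    · rw [dif_pos hcle]
      simp only [hankelH1]
      rw [dif_pos (by omega), dif_pos (by omega)]
      congr 1
      apply Fin.ext
      simp only []
      omega
    · rw [dif_neg hcle]
      simp only [hankelH1]
      rw [dif_neg (by omega)]
  · rw [if_neg hc] at hbdef
    rw [dif_neg hc, dif_neg hc]
    rw [if_pos (by omega)]
    rw [if_neg (by omega), if_pos (by omega)]
    have hcb : (c.val - (n + 2)) % (n + 1) < n + 1 := Nat.mod_lt _ (by omega)
    simp only [hankelH1]
    rw [dif_pos (by omega), dif_pos (by omega)]
    congr 1
    apply Fin.ext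
    simp only []
    omega

lemma key (K : Type*) [Field K] (n : ℕ) (hn : 2 ≤ n) (c : Fin (n * n)) :
    ∑ j : Fin n, (-1 : MvPolynomial (Fin (2 * n)) K) ^ j.val
      * LOne K n hn (rowIdx n j) c = 0 := by
  obtain ⟨b, hbdef⟩ : ∃ b : ℕ, b = if c.val < n + 2 then 0
      else (c.val - (n + 2)) / (n + 1) + 1 := ⟨_, rfl⟩
  have hcn := c.isLt
  have hb : b ≤ n - 2 := by
    rw [hbdef]
    split
    · omega
    · rename_i h
      have hnn : (n - 2) * (n + 1) + (n + 2) = n * n := by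
        obtain ⟨m, rfl⟩ : ∃ m, n = m + 2 := ⟨n - 2, by omega⟩
        simp [Nat.add_sub_cancel]
        ring
      have h1 : c.val - (n + 2) < (n - 2) * (n + 1) := by omega
      have h2 := (Nat.div_lt_iff_lt_mul (show 0 < n + 1 by omega)).mpr h1
      omega
  set j0 : Fin n := ⟨n - 1 - b, by omega⟩ with hj0
  set j1 : Fin n := ⟨n - 2 - b, by omega⟩ with hj1
  set f : Fin n → MvPolynomial (Fin (2 * n)) K :=
    fun j => (-1 : MvPolynomial (Fin (2 * n)) K) ^ j.val * LOne K n hn (rowIdx n j) c with hf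
  have hne : j1 ≠ j0 := by
    intro h
    have := congrArg Fin.val h
    simp [hj0, hj1] at this
    omega
  have hzero : ∀ j, j ≠ j0 → j ≠ j1 → f j = 0 := by
    intro j h0 h1
    have hv0 : j.val ≠ n - 1 - b := fun h => h0 (Fin.ext h)
    have hv1 : j.val ≠ n - 2 - b := fun h => h1 (Fin.ext h)
    have hjlt := j.isLt
    rw [hf]
    simp only [LOne_rowIdx]
    by_cases hc : c.val < n + 2
    · rw [if_pos hc] at hbdef
      rw [dif_pos hc, if_neg (by omega), if_neg (by omega), mul_zero]
    · rw [if_neg hc] at hbdef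
      rw [dif_neg hc, if_neg (by omega), if_neg (by omega), mul_zero]
  have hsum : ∑ j : Fin n, f j = f j0 + f j1 := by
    rw [← Finset.sum_subset (Finset.subset_univ ({j0, j1} : Finset (Fin n)))
      (fun x _ hx => by
        simp only [Finset.mem_insert, Finset.mem_singleton] at hx
        push_neg at hx
        exact hzero x hx.1 hx.2)]
    rw [Finset.sum_pair (hne ∘ Eq.symm)]
  rw [hsum, hf]
  simp only [hj0, hj1]
  clear hsum hzero hne hf hj0 hj1
  clear_value f j0 j1
  clear f j0 j1
  rw [entry_eq K n hn c b hbdef hb (by omega) (by omega)]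
  have hpow : ((-1 : MvPolynomial (Fin (2 * n)) K) ^ (n - 1 - b))
      = -((-1 : MvPolynomial (Fin (2 * n)) K) ^ (n - 2 - b)) := by
    rw [show n - 1 - b = (n - 2 - b) + 1 from by omega, pow_succ]; ring
  rw [hpow]
  ring

lemma rowIdx_injective (n : ℕ) : Function.Injective (rowIdx n) := by
  intro i j h
  apply Fin.ext
  have hi := rowIdx_mod n i
  have hj := rowIdx_mod n j
  rw [← hi, ← hj, h]

/-- The staircase matrix `L[1]` has determinant zero; indeed the alternating sum of
rows `Σ_{j=1}^{n} (−1)^{j+1} R_{n²−jn+j}` vanishes identically. -/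
theorem stmt17 (K : Type*) [Field K] (n : ℕ) (hn : 2 ≤ n) :
    (LOne K n hn).det = 0
    ∧ ∀ c : Fin (n * n),
        ∑ j : Fin n, (-1 : MvPolynomial (Fin (2 * n)) K) ^ j.val
          * LOne K n hn (rowIdx n j) c = 0 := by
  refine ⟨?_, key K n hn⟩
  rw [← Matrix.exists_vecMul_eq_zero_iff]
  refine ⟨fun r => ∑ j : Fin n, if r = rowIdx n j then
      (-1 : MvPolynomial (Fin (2 * n)) K) ^ j.val else 0, ?_, ?_⟩
  · intro h
    have h0 := congrFun h (rowIdx n ⟨0, by omega⟩)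
    simp only [Pi.zero_apply, (rowIdx_injective n).eq_iff, Finset.sum_ite_eq,
      Finset.mem_univ, if_true, pow_zero] at h0
    exact one_ne_zero h0
  · funext c
    simp only [Matrix.vecMul, dotProduct, Finset.sum_mul, ite_mul, zero_mul,
      Pi.zero_apply]
    rw [Finset.sum_comm]
    simp only [Finset.sum_ite_eq', Finset.mem_univ, if_true]
    exact key K n hn c
end
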